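/- arXiv:1202.2203 — 2 statements merged into one kernel-verified Lean document; each statement's English description precedes it below -/
import Mathlib

section
/- For every phylogenetic tree T ∈ 𝒯_n with n ≥ 4, the number of distinct TBR operations on T is |O_TBR(T)| = 4Γ(T) − 4(n−2)(n−3). -/
/-!
Formalization framework for unrooted binary phylogenetic trees on the
leaf set `Fin n`, encoded via their split systems (Buneman's
splits-equivalence theorem: a binary phylogenetic tree is uniquely
determined by its set of splits, which is a maximal pairwise-compatible
collection of proper bipartitions of the leaf set containing all
trivial splits).  A split `A | Aᶜ` is recorded by storing both of its
sides.
-/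

/-- Two sides (subsets of leaves) are compatible: the corresponding
splits can coexist in a tree. -/
def SidesCompatible {n : ℕ} (A B : Finset (Fin n)) : Prop :=
  A ⊆ B ∨ B ⊆ A ∨ Disjoint A B ∨ A ∪ B = Finset.univ

/-- An unrooted binary phylogenetic tree on leaf set `Fin n`,
represented by the set of sides of its splits. -/
structure PhyloTree (n : ℕ) where
  sides : Finset (Finset (Fin n))
  proper : ∀ A ∈ sides, A.Nonempty ∧ A ≠ Finset.univ
  compl_mem : ∀ A ∈ sides, Aᶜ ∈ sides
  singleton_mem : ∀ x : Fin n, {x} ∈ sides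
  compatible : ∀ A ∈ sides, ∀ B ∈ sides, SidesCompatible A B
  maximal : ∀ A : Finset (Fin n), A.Nonempty → A ≠ Finset.univ →
    (∀ B ∈ sides, SidesCompatible A B) → A ∈ sides

namespace PhyloTree

variable {n : ℕ}

/-- The split system of the restricted tree `T|X`: two trees agree on
`X` (i.e. `T|X = T'|X`) iff their restricted split systems agree. -/
def restrict (T : PhyloTree n) (X : Finset (Fin n)) : Finset (Finset (Fin n)) :=
  T.sides.image (· ∩ X)

/-- `Γ(T)`: the sum of `|A| * |B|` over all non-trivial splits `A|B` of
`T` (each unordered split is stored twice in `sides`, hence the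
division by two, which is exact). -/
def gamma (T : PhyloTree n) : ℕ :=
  (∑ A ∈ T.sides.filter (fun A => 2 ≤ A.card ∧ 2 ≤ Aᶜ.card), A.card * Aᶜ.card) / 2

/-- A tree-rearrangement move: the deleted edge of `T` (recorded as the
unordered split it induces) together with the output tree. -/
abbrev Move (n : ℕ) := Sym2 (Finset (Fin n)) × PhyloTree n

/-- The set of TBR operations on `T`: delete the edge inducing the
split `A | Aᶜ` and reconnect, obtaining a distinct tree `θ.2`.  The
defining property is that deleting the corresponding edges from `T`
and from `θ.2` yields the same forest, i.e. `A|Aᶜ` is a split of both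
trees and the two restrictions agree. -/
def OTBR (T : PhyloTree n) : Set (Move n) :=
  { θ | θ.2 ≠ T ∧ ∃ A : Finset (Fin n),
      θ.1 = Sym2.mk A Aᶜ ∧ A ∈ T.sides ∧ A ∈ θ.2.sides ∧
      T.restrict A = θ.2.restrict A ∧ T.restrict Aᶜ = θ.2.restrict Aᶜ }

/-- SPR operations: TBR operations where one component `T|A` of the
bisection (the pruned subtree) is regrafted preserving its rooting,
i.e. `T|(A ∪ {x}) = θ(T)|(A ∪ {x})` for some (equivalently every) leaf
`x` of the other side. -/
def OSPR (T : PhyloTree n) : Set (Move n) :=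
  { θ | θ ∈ T.OTBR ∧ ∃ A : Finset (Fin n), θ.1 = Sym2.mk A Aᶜ ∧
      ∃ x ∈ Aᶜ, T.restrict (insert x A) = θ.2.restrict (insert x A) }

/-- The effect on sides of swapping the pendant subtrees `T|Y` and
`T|Z` (for disjoint clusters `Y`, `Z`). -/
def swapSide (Y Z A : Finset (Fin n)) : Finset (Fin n) :=
  if Y ⊆ A ∧ Disjoint Z A then (A \ Y) ∪ Z
  else if Z ⊆ A ∧ Disjoint Y A then (A \ Z) ∪ Y
  else A

/-- NNI operations: SPR operations in which the pruned subtree `T|Y` is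
swapped with a pendant subtree `T|Z` for some cluster `Z ≠ Y` of `T`. -/
def ONNI (T : PhyloTree n) : Set (Move n) :=
  { θ | θ ∈ T.OTBR ∧ ∃ Y Z : Finset (Fin n),
      θ.1 = Sym2.mk Y Yᶜ ∧
      (∃ x ∈ Yᶜ, T.restrict (insert x Y) = θ.2.restrict (insert x Y)) ∧
      Z ∈ T.sides ∧ Z ≠ Y ∧ Disjoint Y Z ∧
      θ.2.sides = T.sides.image (swapSide Y Z) }

/-- The TBR neighbourhood `N_TBR(T) = {θ(T) : θ ∈ O_TBR(T)}`. -/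
def NTBR (T : PhyloTree n) : Set (PhyloTree n) := Prod.snd '' T.OTBR

/-- The SPR neighbourhood. -/
def NSPR (T : PhyloTree n) : Set (PhyloTree n) := Prod.snd '' T.OSPR

/-- The NNI neighbourhood. -/
def NNNI (T : PhyloTree n) : Set (PhyloTree n) := Prod.snd '' T.ONNI

/-- A caterpillar: every internal vertex (equivalently, every
tripartition of the leaves into three clusters) is adjacent to a
leaf. -/
def IsCaterpillar (T : PhyloTree n) : Prop :=
  ∀ A B C : Finset (Fin n), A ∈ T.sides → B ∈ T.sides → C ∈ T.sides →
    Disjoint A B → Disjoint A C → Disjoint B C → A ∪ B ∪ C = Finset.univ →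
    (A.card = 1 ∨ B.card = 1 ∨ C.card = 1)

/-- A complete (maximally balanced) tree. -/
def IsComplete (T : PhyloTree n) : Prop :=
  ∃ k : ℕ, 3 * 2 ^ k ≤ n ∧ n < 3 * 2 ^ (k + 1) ∧
    (∃ Y ∈ T.sides, Y.card = 2 ^ (k + 1)) ∧
    ∀ Y ∈ T.sides, 2 ≤ Y.card → Y.card ≤ 2 ^ (k + 1) →
      ∃ Y₁ Y₂ : Finset (Fin n), Y₁ ∈ T.sides ∧ Y₂ ∈ T.sides ∧
        Disjoint Y₁ Y₂ ∧ Y₁ ∪ Y₂ = Y ∧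
        ∃ j : ℕ, Y₁.card = 2 ^ j ∧ 2 ^ (j - 1) ≤ Y₂.card ∧ Y₂.card < 2 ^ (j + 1)

/-- The pendant subtree on the cluster `S` is perfectly balanced:
every cluster inside `S` with at least two leaves splits into two
equal-sized child clusters. -/
def PerfOn (T : PhyloTree n) (S : Finset (Fin n)) : Prop :=
  ∀ Y ∈ T.sides, Y ⊆ S → 2 ≤ Y.card →
    ∃ Y₁ Y₂ : Finset (Fin n), Y₁ ∈ T.sides ∧ Y₂ ∈ T.sides ∧
      Disjoint Y₁ Y₂ ∧ Y₁ ∪ Y₂ = Y ∧ Y₁.card = Y₂.card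

/-- A perfect tree: either `n = 2^k` and `T` is two perfectly balanced
rooted trees with `2^(k-1)` leaves joined by an edge, or
`n = 3·2^(k-1)` and `T` is three perfectly balanced rooted trees with
`2^(k-1)` leaves attached to a common vertex. -/
def IsPerfect (T : PhyloTree n) : Prop :=
  (∃ k : ℕ, n = 2 ^ k ∧ ∃ A ∈ T.sides,
      A.card = 2 ^ (k - 1) ∧ T.PerfOn A ∧ T.PerfOn Aᶜ) ∨
  (∃ k : ℕ, n = 3 * 2 ^ (k - 1) ∧ ∃ A B C : Finset (Fin n),
      A ∈ T.sides ∧ B ∈ T.sides ∧ C ∈ T.sides ∧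
      Disjoint A B ∧ Disjoint A C ∧ Disjoint B C ∧
      A ∪ B ∪ C = Finset.univ ∧
      A.card = 2 ^ (k - 1) ∧ B.card = 2 ^ (k - 1) ∧ C.card = 2 ^ (k - 1) ∧
      T.PerfOn A ∧ T.PerfOn B ∧ T.PerfOn C)

end PhyloTree

namespace PhyloAux
open Finset

variable {n : ℕ}

def CompatOn (X A B : Finset (Fin n)) : Prop :=
  A ⊆ B ∨ B ⊆ A ∨ Disjoint A B ∨ A ∪ B = X

lemma compatOn_univ_iff {A B : Finset (Fin n)} :
    CompatOn Finset.univ A B ↔ SidesCompatible A B := Iff.rfl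

lemma compatOn_symm {X A B : Finset (Fin n)} (h : CompatOn X A B) : CompatOn X B A := by
  rcases h with h | h | h | h
  · exact Or.inr (Or.inl h)
  · exact Or.inl h
  · exact Or.inr (Or.inr (Or.inl h.symm))
  · exact Or.inr (Or.inr (Or.inr (by rwa [Finset.union_comm])))

lemma compatOn_refl (X A : Finset (Fin n)) : CompatOn X A A := Or.inl Finset.Subset.rfl

lemma union_sdiff_of_subset {X A B : Finset (Fin n)} (hA : A ⊆ X) (h : B ⊆ A) :
    A ∪ (X \ B) = X := by
  apply Finset.Subset.antisymm
  · exact Finset.union_subset hA Finset.sdiff_subset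
  · intro x hx
    by_cases hxB : x ∈ B
    · exact Finset.mem_union.2 (Or.inl (h hxB))
    · exact Finset.mem_union.2 (Or.inr (Finset.mem_sdiff.2 ⟨hx, hxB⟩))

lemma subset_sdiff_of_disjoint {X A B : Finset (Fin n)} (hA : A ⊆ X) (h : Disjoint A B) :
    A ⊆ X \ B := by
  intro x hx
  exact Finset.mem_sdiff.2 ⟨hA hx, Finset.disjoint_left.1 h hx⟩

lemma sdiff_subset_of_union {X A B : Finset (Fin n)} (h : A ∪ B = X) : X \ B ⊆ A := by
  intro x hx
  rcases Finset.mem_sdiff.1 hx with ⟨hxX, hxB⟩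
  rcases Finset.mem_union.1 (h ▸ hxX) with h1 | h1
  · exact h1
  · exact absurd h1 hxB

lemma compatOn_sdiff_right {X A B : Finset (Fin n)} (hA : A ⊆ X) (hB : B ⊆ X)
    (h : CompatOn X A B) : CompatOn X A (X \ B) := by
  rcases h with h | h | h | h
  · exact Or.inr (Or.inr (Or.inl (Finset.disjoint_sdiff.mono_left h)))
  · exact Or.inr (Or.inr (Or.inr (union_sdiff_of_subset hA h)))
  · exact Or.inl (subset_sdiff_of_disjoint hA h)
  · exact Or.inr (Or.inl (sdiff_subset_of_union h))

lemma sdiff_sdiff_eq {X A : Finset (Fin n)} (hA : A ⊆ X) : X \ (X \ A) = A := by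
  ext x
  simp only [Finset.mem_sdiff]
  constructor
  · rintro ⟨hxX, hx⟩
    by_contra hxA
    exact hx ⟨hxX, hxA⟩
  · intro hx
    exact ⟨hA hx, fun h => h.2 hx⟩

lemma compatOn_sdiff_right_iff {X A B : Finset (Fin n)} (hA : A ⊆ X) (hB : B ⊆ X) :
    CompatOn X A (X \ B) ↔ CompatOn X A B := by
  constructor
  · intro h
    have := compatOn_sdiff_right hA (Finset.sdiff_subset) h
    rwa [sdiff_sdiff_eq hB] at this
  · exact compatOn_sdiff_right hA hB

lemma compatOn_sdiff_left {X A B : Finset (Fin n)} (hA : A ⊆ X) (hB : B ⊆ X)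
    (h : CompatOn X A B) : CompatOn X (X \ A) B :=
  compatOn_symm (compatOn_sdiff_right hB hA (compatOn_symm h))

/-- Split system on ground set `X`. -/
def IsSys (X : Finset (Fin n)) (S : Finset (Finset (Fin n))) : Prop :=
  (∀ A ∈ S, A ⊆ X ∧ A ≠ ∅ ∧ A ≠ X) ∧
  (∀ A ∈ S, X \ A ∈ S) ∧
  (∀ x ∈ X, ({x} : Finset (Fin n)) ∈ S) ∧
  (∀ A ∈ S, ∀ B ∈ S, CompatOn X A B) ∧
  (∀ A : Finset (Fin n), A ⊆ X → A ≠ ∅ → A ≠ X →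
    (∀ B ∈ S, CompatOn X A B) → A ∈ S)

namespace IsSys

variable {X : Finset (Fin n)} {S : Finset (Finset (Fin n))}

lemma subset (hS : IsSys X S) {A : Finset (Fin n)} (hA : A ∈ S) : A ⊆ X := (hS.1 A hA).1
lemma ne_empty (hS : IsSys X S) {A : Finset (Fin n)} (hA : A ∈ S) : A ≠ ∅ := (hS.1 A hA).2.1
lemma nonempty (hS : IsSys X S) {A : Finset (Fin n)} (hA : A ∈ S) : A.Nonempty :=
  Finset.nonempty_iff_ne_empty.2 (hS.ne_empty hA)
lemma ne_ground (hS : IsSys X S) {A : Finset (Fin n)} (hA : A ∈ S) : A ≠ X := (hS.1 A hA).2.2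
lemma sdiff_mem (hS : IsSys X S) {A : Finset (Fin n)} (hA : A ∈ S) : X \ A ∈ S := hS.2.1 A hA
lemma singleton_mem (hS : IsSys X S) {x : Fin n} (hx : x ∈ X) : ({x} : Finset (Fin n)) ∈ S := hS.2.2.1 x hx
lemma compat (hS : IsSys X S) {A B : Finset (Fin n)} (hA : A ∈ S) (hB : B ∈ S) : CompatOn X A B :=
  hS.2.2.2.1 A hA B hB
lemma maximal (hS : IsSys X S) {A : Finset (Fin n)} (h1 : A ⊆ X) (h2 : A ≠ ∅) (h3 : A ≠ X)
    (h4 : ∀ B ∈ S, CompatOn X A B) : A ∈ S := hS.2.2.2.2 A h1 h2 h3 h4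

lemma ssubset (hS : IsSys X S) {A : Finset (Fin n)} (hA : A ∈ S) : A ⊂ X :=
  lt_of_le_of_ne (hS.subset hA) (hS.ne_ground hA)

lemma sdiff_ne_empty (hS : IsSys X S) {A : Finset (Fin n)} (hA : A ∈ S) : X \ A ≠ ∅ :=
  hS.ne_empty (hS.sdiff_mem hA)

end IsSys
def rSys (S : Finset (Finset (Fin n))) (A : Finset (Fin n)) :
    Finset (Finset (Fin n)) := ((S.image (· ∩ A)).erase ∅).erase A

lemma mem_rSys {S : Finset (Finset (Fin n))} {A W : Finset (Fin n)} :
    W ∈ rSys S A ↔ W ≠ A ∧ W ≠ ∅ ∧ ∃ V ∈ S, V ∩ A = W := by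
  simp only [rSys, Finset.mem_erase, Finset.mem_image]
  try tauto

lemma rSys_subset {S : Finset (Finset (Fin n))} {A W : Finset (Fin n)}
    (h : W ∈ rSys S A) : W ⊆ A := by
  rcases (mem_rSys.1 h).2.2 with ⟨V, _, rfl⟩
  exact Finset.inter_subset_right

lemma mem_rSys_of_mem {S : Finset (Finset (Fin n))} {A W : Finset (Fin n)}
    (hW : W ∈ S) (h1 : W ⊆ A) (h2 : W ≠ ∅) (h3 : W ≠ A) : W ∈ rSys S A :=
  mem_rSys.2 ⟨h3, h2, W, hW, Finset.inter_eq_left.2 h1⟩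

lemma sdiff_mem_rSys {X : Finset (Fin n)} {S : Finset (Finset (Fin n))}
    {A W : Finset (Fin n)} (hS : IsSys X S) (hA : A ∈ S) (hW : W ∈ rSys S A) :
    A \ W ∈ rSys S A := by
  rcases mem_rSys.1 hW with ⟨hWA, hWne, V, hV, rfl⟩
  refine mem_rSys.2 ⟨?_, ?_, X \ V, hS.sdiff_mem hV, ?_⟩
  · intro h
    have : V ∩ A = ∅ := by
      have h2 := sdiff_sdiff_eq (Finset.inter_subset_right : V ∩ A ⊆ A)
      rw [h] at h2
      rw [← h2, Finset.sdiff_self]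
    exact hWne this
  · intro h
    rw [Finset.sdiff_eq_empty_iff_subset] at h
    exact hWA (Finset.Subset.antisymm Finset.inter_subset_right h)
  · ext x
    simp only [Finset.mem_sdiff, Finset.mem_inter]
    constructor
    · rintro ⟨⟨_, hxV⟩, hxA⟩
      exact ⟨hxA, fun h => hxV h.1⟩
    · rintro ⟨hxA, hx⟩
      exact ⟨⟨hS.subset hA hxA, fun hv => hx ⟨hv, hxA⟩⟩, hxA⟩

lemma isSys_rSys {X : Finset (Fin n)} {S : Finset (Finset (Fin n))} {A : Finset (Fin n)}
    (hS : IsSys X S) (hA : A ∈ S) (h2 : 2 ≤ A.card) : IsSys A (rSys S A) := by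
  have hAX : A ⊆ X := hS.subset hA
  refine ⟨?_, ?_, ?_, ?_, ?_⟩
  · intro W hW
    exact ⟨rSys_subset hW, (mem_rSys.1 hW).2.1, (mem_rSys.1 hW).1⟩
  · intro W hW
    exact sdiff_mem_rSys hS hA hW
  · intro x hx
    refine mem_rSys_of_mem (hS.singleton_mem (hAX hx)) (Finset.singleton_subset_iff.2 hx)
      (Finset.singleton_ne_empty x) ?_
    intro h
    rw [← h] at h2
    simp at h2
  · intro W hW V hV
    rcases mem_rSys.1 hW with ⟨-, -, W', hW', rfl⟩
    rcases mem_rSys.1 hV with ⟨-, -, V', hV', rfl⟩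
    rcases hS.compat hW' hV' with h | h | h | h
    · exact Or.inl (Finset.inter_subset_inter h Finset.Subset.rfl)
    · exact Or.inr (Or.inl (Finset.inter_subset_inter h Finset.Subset.rfl))
    · exact Or.inr (Or.inr (Or.inl (h.mono Finset.inter_subset_left Finset.inter_subset_left)))
    · refine Or.inr (Or.inr (Or.inr ?_))
      rw [← Finset.union_inter_distrib_right, h, Finset.inter_eq_right.2 hAX]
  · -- maximality
    intro W hWA hWne hWneA hcomp
    by_contra hWmem
    have hWX : W ⊆ X := hWA.trans hAX
    have hWneX : W ≠ X := by
      intro h; exact hS.ne_ground hA (Finset.Subset.antisymm hAX (h ▸ hWA))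
    -- W itself is not in S (else done), so some C₁ is incompatible with W
    have hW1 : W ∉ S := by
      intro h
      exact hWmem (mem_rSys_of_mem h hWA hWne hWneA)
    have hC₁ : ∃ C ∈ S, ¬CompatOn X W C := by
      by_contra h
      push_neg at h
      exact hW1 (hS.maximal hWX hWne hWneX h)
    -- W ∪ (X \ A) not in S either
    set W' : Finset (Fin n) := W ∪ (X \ A) with hW'def
    have hW'X : W' ⊆ X := Finset.union_subset hWX Finset.sdiff_subset
    have hW'A : W' ∩ A = W := by
      ext x
      simp only [hW'def, Finset.mem_inter, Finset.mem_union, Finset.mem_sdiff]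
      constructor
      · rintro ⟨h1 | h1, h2⟩
        · exact h1
        · exact absurd h2 h1.2
      · intro h; exact ⟨Or.inl h, hWA h⟩
    have hW'ne : W' ≠ ∅ := by
      intro h
      rw [Finset.union_eq_empty] at h
      exact hWne h.1
    have hW'neX : W' ≠ X := by
      obtain ⟨x, hxA, hxW⟩ := Finset.exists_of_ssubset (ssubset_of_subset_of_ne hWA hWneA)
      intro h
      have : x ∈ W' := h ▸ hAX hxA
      rcases Finset.mem_union.1 this with h1 | h1
      · exact hxW h1
      · exact (Finset.mem_sdiff.1 h1).2 hxA
    have hW2 : W' ∉ S := by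
      intro h
      exact hWmem (mem_rSys.2 ⟨hWneA, hWne, W', h, hW'A⟩)
    have hC₂ : ∃ C ∈ S, ¬CompatOn X W' C := by
      by_contra h
      push_neg at h
      exact hW2 (hS.maximal hW'X hW'ne hW'neX h)
    obtain ⟨C₁, hC₁S, hC₁n⟩ := hC₁
    obtain ⟨C₂, hC₂S, hC₂n⟩ := hC₂
    -- replace C₁ by a representative inside A
    obtain ⟨D₁, hD₁S, hD₁A, hD₁n⟩ :
        ∃ D ∈ S, D ⊆ A ∧ ¬CompatOn X W D := by
      rcases hS.compat hC₁S hA with h | h | h | h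
      · exact ⟨C₁, hC₁S, h, hC₁n⟩
      · exact absurd (Or.inl (hWA.trans h)) hC₁n
      · exact absurd (Or.inr (Or.inr (Or.inl (h.mono_right hWA).symm))) hC₁n
      · refine ⟨X \ C₁, hS.sdiff_mem hC₁S, sdiff_subset_of_union (by rwa [Finset.union_comm]), ?_⟩
        intro hc
        exact hC₁n ((compatOn_sdiff_right_iff hWX (hS.subset hC₁S)).1 hc)
    obtain ⟨D₂, hD₂S, hD₂A, hD₂n⟩ :
        ∃ D ∈ S, D ⊆ A ∧ ¬CompatOn X W' D := by
      rcases hS.compat hC₂S hA with h | h | h | h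
      · exact ⟨C₂, hC₂S, h, hC₂n⟩
      · refine absurd (Or.inr (Or.inr (Or.inr ?_))) hC₂n
        apply Finset.Subset.antisymm (Finset.union_subset hW'X (hS.subset hC₂S))
        intro x hx
        by_cases hxA : x ∈ A
        · exact Finset.mem_union.2 (Or.inr (h hxA))
        · exact Finset.mem_union.2 (Or.inl (Finset.mem_union.2
            (Or.inr (Finset.mem_sdiff.2 ⟨hx, hxA⟩))))
      · refine absurd (Or.inr (Or.inl ?_)) hC₂n
        refine (subset_sdiff_of_disjoint (hS.subset hC₂S) h).trans ?_
        exact Finset.subset_union_right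
      · refine ⟨X \ C₂, hS.sdiff_mem hC₂S, sdiff_subset_of_union (by rwa [Finset.union_comm]), ?_⟩
        intro hc
        exact hC₂n ((compatOn_sdiff_right_iff hW'X (hS.subset hC₂S)).1 hc)
    -- analyze D₁
    have hD₁neA : D₁ ≠ A := by
      intro h
      exact hD₁n (Or.inl (h ▸ hWA))
    have hD₁r : D₁ ∈ rSys S A :=
      mem_rSys_of_mem hD₁S hD₁A (hS.ne_empty hD₁S) hD₁neA
    obtain ⟨hn1, hn2, hn3, -⟩ :
        ¬W ⊆ D₁ ∧ ¬D₁ ⊆ W ∧ ¬Disjoint W D₁ ∧ W ∪ D₁ ≠ X := by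
      simpa [CompatOn, not_or] using hD₁n
    have hUD₁ : W ∪ D₁ = A := by
      rcases hcomp D₁ hD₁r with h | h | h | h
      · exact absurd h hn1
      · exact absurd h hn2
      · exact absurd h hn3
      · exact h
    -- analyze D₂
    have hD₂neA : D₂ ≠ A := by
      intro h
      subst h
      refine hD₂n (Or.inr (Or.inr (Or.inr ?_)))
      apply Finset.Subset.antisymm (Finset.union_subset hW'X (hS.subset hD₂S))
      intro x hx
      by_cases hxA : x ∈ D₂
      · exact Finset.mem_union.2 (Or.inr hxA)
      · exact Finset.mem_union.2 (Or.inl (Finset.mem_union.2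
          (Or.inr (Finset.mem_sdiff.2 ⟨hx, hxA⟩))))
    have hD₂r : D₂ ∈ rSys S A :=
      mem_rSys_of_mem hD₂S hD₂A (hS.ne_empty hD₂S) hD₂neA
    have hWD₂ : W ⊆ D₂ ∧ W ≠ D₂ := by
      rcases hcomp D₂ hD₂r with h | h | h | h
      · refine ⟨h, ?_⟩
        rintro rfl
        exact hD₂n (Or.inr (Or.inl Finset.subset_union_left))
      · exact absurd (Or.inr (Or.inl (h.trans Finset.subset_union_left))) hD₂n
      · refine absurd (Or.inr (Or.inr (Or.inl ?_))) hD₂n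
        have : Disjoint D₂ (X \ A) := Finset.disjoint_sdiff.mono_left hD₂A
        exact (Finset.disjoint_union_left.2 ⟨h, this.symm⟩)
      · refine absurd (Or.inr (Or.inr (Or.inr ?_))) hD₂n
        rw [hW'def, Finset.union_comm W (X \ A), Finset.union_assoc, h,
          Finset.union_comm, union_sdiff_of_subset hAX Finset.Subset.rfl]
    -- final contradiction
    rcases hS.compat hD₁S hD₂S with h | h | h | h
    · refine hD₂neA (Finset.Subset.antisymm hD₂A ?_)
      rw [← hUD₁]
      exact Finset.union_subset hWD₂.1 h
    · exact hn1 (hWD₂.1.trans h)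
    · exact hn3 (h.symm.mono_left hWD₂.1)
    · refine hS.ne_ground hA (Finset.Subset.antisymm hAX ?_)
      rw [← h]
      exact Finset.union_subset hD₁A hD₂A

/-! ### Pairing (complement-involution) counting -/

lemma pair_sum {β M : Type*} [DecidableEq β] [AddCommMonoid M] (𝒮 : Finset β) (i : β → β)
    (enc : β → ℕ)
    (hmem : ∀ a ∈ 𝒮, i a ∈ 𝒮) (hinv : ∀ a ∈ 𝒮, i (i a) = a)
    (hne : ∀ a ∈ 𝒮, enc (i a) ≠ enc a)
    (f : β → M) (hf : ∀ a ∈ 𝒮, f (i a) = f a) :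
    ∑ a ∈ 𝒮, f a = 2 • ∑ a ∈ 𝒮.filter (fun a => enc a < enc (i a)), f a := by
  classical
  have hsplit := Finset.sum_filter_add_sum_filter_not 𝒮 (fun a => enc a < enc (i a)) f
  have himg : 𝒮.filter (fun a => ¬ enc a < enc (i a)) =
      (𝒮.filter (fun a => enc a < enc (i a))).image i := by
    ext a
    simp only [Finset.mem_filter, Finset.mem_image, not_lt]
    constructor
    · rintro ⟨ha, hle⟩
      refine ⟨i a, ⟨hmem a ha, ?_⟩, hinv a ha⟩
      rw [hinv a ha]
      exact lt_of_le_of_ne hle (hne a ha)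
    · rintro ⟨b, ⟨hb, hlt⟩, rfl⟩
      refine ⟨hmem b hb, ?_⟩
      rw [hinv b hb]
      exact le_of_lt hlt
  have hinj : Set.InjOn i (𝒮.filter (fun a => enc a < enc (i a))) := by
    intro a ha b hb h
    have ha' := (Finset.mem_filter.1 ha).1
    have hb' := (Finset.mem_filter.1 hb).1
    have := congrArg i h
    rwa [hinv a ha', hinv b hb'] at this
  have hsum2 : ∑ a ∈ 𝒮.filter (fun a => ¬ enc a < enc (i a)), f a
      = ∑ a ∈ 𝒮.filter (fun a => enc a < enc (i a)), f a := by
    rw [himg, Finset.sum_image hinj]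
    apply Finset.sum_congr rfl
    intro a ha
    exact hf a (Finset.mem_filter.1 ha).1
  rw [← hsplit, hsum2, two_nsmul]

lemma pair_card {β : Type*} [DecidableEq β] (𝒮 : Finset β) (i : β → β)
    (enc : β → ℕ)
    (hmem : ∀ a ∈ 𝒮, i a ∈ 𝒮) (hinv : ∀ a ∈ 𝒮, i (i a) = a)
    (hne : ∀ a ∈ 𝒮, enc (i a) ≠ enc a) :
    𝒮.card = 2 * (𝒮.filter (fun a => enc a < enc (i a))).card := by
  have := pair_sum 𝒮 i enc hmem hinv hne (fun _ => (1 : ℕ)) (fun _ _ => rfl)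
  simpa only [← Finset.card_eq_sum_ones, smul_eq_mul] using this

/-! ### Cherry existence -/

lemma exists_cherry {X : Finset (Fin n)} {S : Finset (Finset (Fin n))}
    (hS : IsSys X S) (h4 : 4 ≤ X.card) :
    ∃ x y : Fin n, x ≠ y ∧ ({x, y} : Finset (Fin n)) ∈ S := by
  classical
  have hXne : X.Nonempty := Finset.card_pos.1 (by omega)
  obtain ⟨x₀, hx₀⟩ := hXne
  have hT : (S.filter (fun A => 2 ≤ A.card)).Nonempty := by
    refine ⟨X \ {x₀}, Finset.mem_filter.2 ⟨hS.sdiff_mem (hS.singleton_mem hx₀), ?_⟩⟩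
    rw [Finset.card_sdiff_of_subset (Finset.singleton_subset_iff.2 hx₀), Finset.card_singleton]
    omega
  obtain ⟨A, hAT, hAmin⟩ := Finset.exists_min_image _ Finset.card hT
  obtain ⟨hA, hA2⟩ := Finset.mem_filter.1 hAT
  have hAX : A ⊆ X := hS.subset hA
  obtain ⟨a₀, ha₀⟩ := hS.nonempty hA
  have hB : (S.filter (fun B => B ⊂ A)).Nonempty := by
    refine ⟨{a₀}, Finset.mem_filter.2 ⟨hS.singleton_mem (hAX ha₀), ?_⟩⟩
    refine Finset.ssubset_iff_subset_ne.2 ⟨Finset.singleton_subset_iff.2 ha₀, ?_⟩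
    intro h
    rw [← h, Finset.card_singleton] at hA2
    omega
  obtain ⟨B, hBT, hBmax⟩ := Finset.exists_max_image _ Finset.card hB
  obtain ⟨hBS, hBA⟩ := Finset.mem_filter.1 hBT
  have hBne := hS.nonempty hBS
  -- A \ B is compatible with everything, hence a member of S
  have hABmem : A \ B ∈ S := by
    refine hS.maximal (Finset.sdiff_subset.trans hAX) ?_ ?_ ?_
    · intro h
      rw [Finset.sdiff_eq_empty_iff_subset] at h
      exact hBA.2 h
    · intro h
      exact hS.ne_ground hA (Finset.Subset.antisymm hAX (h ▸ Finset.sdiff_subset))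
    · intro C hC
      rcases hS.compat hC hBS with hCB | hBC | hdis | hun
      · exact Or.inr (Or.inr (Or.inl ((Finset.sdiff_disjoint).mono_right hCB)))
      · rcases hS.compat hC hA with h | h | h | h
        · by_cases hCA : C = A
          · exact Or.inl (by rw [hCA]; exact Finset.sdiff_subset)
          · have hCmem : C ∈ S.filter (fun B => B ⊂ A) :=
              Finset.mem_filter.2 ⟨hC, Finset.ssubset_iff_subset_ne.2 ⟨h, hCA⟩⟩
            have heq : B = C := Finset.eq_of_subset_of_card_le hBC (hBmax C hCmem)
            subst heq
            exact Or.inr (Or.inr (Or.inl Finset.sdiff_disjoint))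
        · exact Or.inl (Finset.sdiff_subset.trans h)
        · exact Or.inr (Or.inr (Or.inl (h.mono_right Finset.sdiff_subset).symm))
        · refine Or.inr (Or.inr (Or.inr ?_))
          apply Finset.Subset.antisymm
            (Finset.union_subset (Finset.sdiff_subset.trans hAX) (hS.subset hC))
          intro z hz
          rcases Finset.mem_union.1 (h ▸ hz) with h1 | h1
          · exact Finset.mem_union.2 (Or.inr h1)
          · by_cases hzB : z ∈ B
            · exact Finset.mem_union.2 (Or.inr (hBC hzB))
            · exact Finset.mem_union.2 (Or.inl (Finset.mem_sdiff.2 ⟨h1, hzB⟩))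
      · rcases hS.compat hC hA with h | h | h | h
        · exact Or.inr (Or.inl (Finset.subset_sdiff.2 ⟨h, hdis⟩))
        · exfalso
          obtain ⟨b, hb⟩ := hBne
          exact (Finset.disjoint_left.1 hdis (h (hBA.1 hb))) hb
        · exact Or.inr (Or.inr (Or.inl (h.mono_right Finset.sdiff_subset).symm))
        · have hEX : X \ C ∈ S := hS.sdiff_mem hC
          have hEA : X \ C ⊆ A := sdiff_subset_of_union (by rwa [Finset.union_comm])
          by_cases hEeq : X \ C = A
          · refine Or.inr (Or.inr (Or.inl ?_))
            have hdAC : Disjoint A C := by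
              rw [← hEeq]
              exact Finset.sdiff_disjoint
            exact hdAC.mono_left Finset.sdiff_subset
          · have hEmem : X \ C ∈ S.filter (fun B => B ⊂ A) :=
              Finset.mem_filter.2 ⟨hEX, Finset.ssubset_iff_subset_ne.2 ⟨hEA, hEeq⟩⟩
            have hBE : B ⊆ X \ C := Finset.subset_sdiff.2 ⟨hBA.1.trans hAX, hdis.symm⟩
            have hBeq : B = X \ C := Finset.eq_of_subset_of_card_le hBE (hBmax _ hEmem)
            have hCeq : C = X \ B := by
              rw [hBeq, sdiff_sdiff_eq (hS.subset hC)]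
            refine Or.inl ?_
            rw [hCeq]
            intro z hz
            rcases Finset.mem_sdiff.1 hz with ⟨hzA, hzB⟩
            exact Finset.mem_sdiff.2 ⟨hAX hzA, hzB⟩
      · refine Or.inl ?_
        intro z hz
        rcases Finset.mem_sdiff.1 hz with ⟨hzA, hzB⟩
        rcases Finset.mem_union.1 (hun ▸ hAX hzA) with h1 | h1
        · exact h1
        · exact absurd h1 hzB
  -- minimality forces |A| = 2
  have hABcard : (A \ B).card = A.card - B.card := Finset.card_sdiff_of_subset hBA.1
  have hBcard1 : B.card = 1 := by
    by_contra h
    have h2 : 2 ≤ B.card := by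
      have := Finset.card_pos.2 hBne
      omega
    have := hAmin B (Finset.mem_filter.2 ⟨hBS, h2⟩)
    have := Finset.card_lt_card hBA
    omega
  have hABcard1 : (A \ B).card = 1 := by
    by_contra h
    have hpos : 0 < (A \ B).card := by
      refine Finset.card_pos.2 (hS.nonempty hABmem)
    have h2 : 2 ≤ (A \ B).card := by omega
    have := hAmin _ (Finset.mem_filter.2 ⟨hABmem, h2⟩)
    have hlt : B.card < A.card := Finset.card_lt_card hBA
    omega
  have hA2' : A.card = 2 := by
    have hlt : B.card < A.card := Finset.card_lt_card hBA
    omega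
  obtain ⟨x, y, hxy, rfl⟩ := Finset.card_eq_two.1 hA2'
  exact ⟨x, y, hxy, hA⟩

lemma inter_sdiff_singleton {X A : Finset (Fin n)} (hA : A ⊆ X) (x : Fin n) :
    A ∩ (X \ {x}) = A.erase x := by
  ext z
  simp only [Finset.mem_inter, Finset.mem_sdiff, Finset.mem_erase, Finset.mem_singleton]
  constructor
  · rintro ⟨hz, _, hzx⟩; exact ⟨hzx, hz⟩
  · rintro ⟨hzx, hz⟩; exact ⟨hz, hA hz, hzx⟩

lemma sys_card_aux : ∀ (m : ℕ) (X : Finset (Fin n)) (S : Finset (Finset (Fin n))),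
    X.card = m → IsSys X S → 2 ≤ m → S.card + 6 = 4 * m := by
  intro m
  induction m using Nat.strong_induction_on with
  | _ m ih =>
  intro X S hm hS h2
  by_cases h4 : 4 ≤ m
  · -- inductive step: find a cherry and contract it
    subst hm
    obtain ⟨x, y, hxy, hch⟩ := exists_cherry hS h4
    have hchX : ({x, y} : Finset (Fin n)) ⊆ X := hS.subset hch
    have hxX : x ∈ X := hchX (Finset.mem_insert_self x {y})
    have hyX : y ∈ X := hchX (Finset.mem_insert_of_mem (Finset.mem_singleton_self y))
    set X' := X \ {x} with hX'
    have hX'mem : X' ∈ S := hS.sdiff_mem (hS.singleton_mem hxX)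
    have hX'card : X'.card = X.card - 1 := by
      rw [hX', Finset.card_sdiff_of_subset (Finset.singleton_subset_iff.2 hxX), Finset.card_singleton]
    have hX'2 : 2 ≤ X'.card := by omega
    have hS' : IsSys X' (rSys S X') := isSys_rSys hS hX'mem hX'2
    have hIH : (rSys S X').card + 6 = 4 * X'.card :=
      ih X'.card (by omega) X' _ rfl hS' hX'2
    have hxX' : x ∉ X' := by simp [hX']
    have hyX' : y ∈ X' := Finset.mem_sdiff.2 ⟨hyX, by simp [hxy.symm]⟩
    -- classification of members containing x
    have K1 : ∀ A ∈ S, x ∈ A → A = {x} ∨ A = X \ {y} ∨ ({x, y} : Finset (Fin n)) ⊆ A := by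
      intro A hA hxA
      rcases hS.compat hA hch with h | h | h | h
      · by_cases hyA : y ∈ A
        · exact Or.inr (Or.inr (Finset.insert_subset hxA (Finset.singleton_subset_iff.2 hyA)))
        · refine Or.inl (Finset.Subset.antisymm ?_ (Finset.singleton_subset_iff.2 hxA))
          intro z hz
          rcases Finset.mem_insert.1 (h hz) with rfl | hz'
          · exact Finset.mem_singleton_self z
          · exact absurd ((Finset.mem_singleton.1 hz') ▸ hz) hyA
      · exact Or.inr (Or.inr h)
      · exact absurd (Finset.mem_insert_self x {y}) (Finset.disjoint_left.1 h hxA)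
      · right; left
        have hyA : y ∉ A := by
          intro hyA
          apply hS.ne_ground hA
          apply Finset.Subset.antisymm (hS.subset hA)
          intro z hz
          rw [← h] at hz
          rcases Finset.mem_union.1 hz with h1 | h1
          · exact h1
          · rcases Finset.mem_insert.1 h1 with rfl | h1
            · exact hxA
            · exact (Finset.mem_singleton.1 h1) ▸ hyA
        apply Finset.Subset.antisymm
        · intro z hz
          refine Finset.mem_sdiff.2 ⟨hS.subset hA hz, ?_⟩
          simp only [Finset.mem_singleton]
          rintro rfl
          exact hyA hz
        · intro z hz
          obtain ⟨hzX, hzy⟩ := Finset.mem_sdiff.1 hz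
          rw [← h] at hzX
          rcases Finset.mem_union.1 hzX with h1 | h1
          · exact h1
          · rcases Finset.mem_insert.1 h1 with rfl | h1
            · exact hxA
            · exact absurd h1 (by simpa using hzy)
    have K2 : ∀ A ∈ S, y ∈ A → x ∉ A → A = {y} ∨ A = X \ {x} := by
      intro A hA hyA hxA
      have hXA : X \ A ∈ S := hS.sdiff_mem hA
      have hx' : x ∈ X \ A := Finset.mem_sdiff.2 ⟨hxX, hxA⟩
      rcases K1 _ hXA hx' with h | h | h
      · right
        rw [← sdiff_sdiff_eq (hS.subset hA), h]
      · left
        have h2' : X \ (X \ A) = X \ (X \ {y}) := by rw [h]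
        rwa [sdiff_sdiff_eq (hS.subset hA),
          sdiff_sdiff_eq (Finset.singleton_subset_iff.2 hyX)] at h2'
      · exfalso
        have : y ∈ X \ A := h (Finset.mem_insert_of_mem (Finset.mem_singleton_self y))
        exact (Finset.mem_sdiff.1 this).2 hyA
    set S₂ := ((S.erase {x}).erase {x, y}).erase (X \ {y}) with hS₂
    have memS₂ : ∀ {A : Finset (Fin n)},
        A ∈ S₂ ↔ A ≠ X \ {y} ∧ A ≠ ({x, y} : Finset (Fin n)) ∧ A ≠ {x} ∧ A ∈ S := by
      intro A
      simp only [hS₂, Finset.mem_erase]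
      try tauto
    have hres : ∀ A ∈ S, A ∩ X' = A.erase x :=
      fun A hA => inter_sdiff_singleton (hS.subset hA) x
    -- injectivity on S₂
    have key : ∀ A ∈ S₂, ∀ B ∈ S₂, A ∩ X' = B ∩ X' → x ∈ A → x ∉ B → False := by
      intro A hA B hB h hxA hxB
      obtain ⟨hA1, hA2, hA3, hAS⟩ := memS₂.1 hA
      obtain ⟨hB1, hB2, hB3, hBS⟩ := memS₂.1 hB
      rw [hres A hAS, hres B hBS, Finset.erase_eq_of_notMem hxB] at h
      have hxyA : ({x, y} : Finset (Fin n)) ⊆ A := by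
        rcases K1 A hAS hxA with h1 | h1 | h1
        · exact absurd h1 hA3
        · exact absurd h1 hA1
        · exact h1
      have hyB : y ∈ B := by
        rw [← h]
        exact Finset.mem_erase.2 ⟨hxy.symm,
          hxyA (Finset.mem_insert_of_mem (Finset.mem_singleton_self y))⟩
      rcases K2 B hBS hyB hxB with h1 | h1
      · apply hA2
        rw [← Finset.insert_erase hxA, h, h1]
      · apply hS.ne_ground hAS
        rw [← Finset.insert_erase hxA, h, h1]
        ext z
        simp only [Finset.mem_insert, Finset.mem_sdiff, Finset.mem_singleton]
        constructor
        · rintro (rfl | ⟨hz, _⟩)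
          · exact hxX
          · exact hz
        · intro hz
          by_cases hzx : z = x
          · exact Or.inl hzx
          · exact Or.inr ⟨hz, hzx⟩
    have L1 : Set.InjOn (· ∩ X') ↑S₂ := by
      intro A hA B hB h
      have hA' := Finset.mem_coe.1 hA
      have hB' := Finset.mem_coe.1 hB
      by_cases hxA : x ∈ A <;> by_cases hxB : x ∈ B
      · have hAS := (memS₂.1 hA').2.2.2
        have hBS := (memS₂.1 hB').2.2.2
        have h' : A ∩ X' = B ∩ X' := h
        rw [hres A hAS, hres B hBS] at h'
        rw [← Finset.insert_erase hxA, ← Finset.insert_erase hxB, h']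
      · exact absurd (key A hA' B hB' h hxA hxB) (by simp)
      · exact absurd (key B hB' A hA' h.symm hxB hxA) (by simp)
      · have hAS := (memS₂.1 hA').2.2.2
        have hBS := (memS₂.1 hB').2.2.2
        have h' : A ∩ X' = B ∩ X' := h
        rw [hres A hAS, hres B hBS, Finset.erase_eq_of_notMem hxA,
          Finset.erase_eq_of_notMem hxB] at h'
        exact h'
    have L2 : rSys S X' = (S₂.image (· ∩ X')).erase X' := by
      ext W
      simp only [Finset.mem_erase, Finset.mem_image, mem_rSys]
      constructor
      · rintro ⟨hWX', hWne, V, hVS, rfl⟩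
        refine ⟨hWX', ?_⟩
        by_cases hV2 : V ∈ S₂
        · exact ⟨V, hV2, rfl⟩
        · have hVcases : V = X \ {y} ∨ V = ({x, y} : Finset (Fin n)) ∨ V = {x} := by
            by_contra hc
            push_neg at hc
            exact hV2 (memS₂.2 ⟨hc.1, hc.2.1, hc.2.2, hVS⟩)
          rcases hVcases with rfl | rfl | rfl
          · refine ⟨X \ {x, y}, memS₂.2 ⟨?_, ?_, ?_, hS.sdiff_mem hch⟩, ?_⟩
            · intro hcon
              have hx1 : x ∈ X \ {y} := Finset.mem_sdiff.2 ⟨hxX, by simp [hxy]⟩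
              rw [← hcon] at hx1
              simp at hx1
            · intro hcon
              have hy1 : y ∈ ({x, y} : Finset (Fin n)) :=
                Finset.mem_insert_of_mem (Finset.mem_singleton_self y)
              rw [← hcon] at hy1
              simp at hy1
            · intro hcon
              have hx1 : x ∈ ({x} : Finset (Fin n)) := Finset.mem_singleton_self x
              rw [← hcon] at hx1
              simp at hx1
            · ext z
              simp only [Finset.mem_inter, Finset.mem_sdiff, Finset.mem_singleton,
                Finset.mem_insert, hX']
              tauto
          · refine ⟨{y}, memS₂.2 ⟨?_, ?_, ?_, hS.singleton_mem hyX⟩, ?_⟩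
            · intro hcon
              have : y ∈ X \ {y} := by rw [← hcon]; exact Finset.mem_singleton_self y
              simp at this
            · intro hcon
              have : x ∈ ({y} : Finset (Fin n)) := by
                rw [hcon]; exact Finset.mem_insert_self x {y}
              exact hxy (Finset.mem_singleton.1 this)
            · intro hcon
              have : y ∈ ({x} : Finset (Fin n)) := by
                rw [← hcon]; exact Finset.mem_singleton_self y
              exact hxy (Finset.mem_singleton.1 this).symm
            · ext z
              simp only [Finset.mem_inter, Finset.mem_singleton, Finset.mem_insert,
                Finset.mem_sdiff, hX']
              tauto
          · exfalso
            apply hWne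
            ext z
            simp only [Finset.mem_inter, Finset.mem_singleton, Finset.mem_sdiff, hX',
              Finset.notMem_empty, iff_false]
            rintro ⟨rfl, _, hzz⟩
            exact hzz rfl
      · rintro ⟨hWX', V, hV2, rfl⟩
        obtain ⟨hV1, hV2', hV3, hVS⟩ := memS₂.1 hV2
        refine ⟨hWX', ?_, V, hVS, rfl⟩
        rw [hres V hVS]
        intro hemp
        have hsub : V ⊆ {x} := by
          intro z hz
          by_contra hzx
          have : z ∈ V.erase x := Finset.mem_erase.2 ⟨by simpa using hzx, hz⟩
          rw [hemp] at this
          simp at this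
        rcases Finset.subset_singleton_iff.1 hsub with h1 | h1
        · exact hS.ne_empty hVS h1
        · exact hV3 h1
    -- cardinalities
    have e1 : {x} ∈ S := hS.singleton_mem hxX
    have e2 : ({x, y} : Finset (Fin n)) ∈ S.erase {x} := by
      refine Finset.mem_erase.2 ⟨?_, hch⟩
      intro hcon
      have : y ∈ ({x} : Finset (Fin n)) := by
        rw [← hcon]; exact Finset.mem_insert_of_mem (Finset.mem_singleton_self y)
      exact hxy (Finset.mem_singleton.1 this).symm
    have e3 : X \ {y} ∈ (S.erase {x}).erase {x, y} := by
      refine Finset.mem_erase.2 ⟨?_, Finset.mem_erase.2 ⟨?_, hS.sdiff_mem (hS.singleton_mem hyX)⟩⟩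
      · intro hcon
        have : y ∈ X \ {y} := by
          rw [hcon]; exact Finset.mem_insert_of_mem (Finset.mem_singleton_self y)
        simp at this
      · intro hcon
        have hc1 : (X \ {y}).card = X.card - 1 := by
          rw [Finset.card_sdiff_of_subset (Finset.singleton_subset_iff.2 hyX), Finset.card_singleton]
        rw [hcon, Finset.card_singleton] at hc1
        omega
    have cS₂ : S₂.card = S.card - 3 := by
      rw [hS₂, Finset.card_erase_of_mem e3, Finset.card_erase_of_mem e2,
        Finset.card_erase_of_mem e1]
      omega
    have hX'S₂ : X' ∈ S₂ := by
      refine memS₂.2 ⟨?_, ?_, ?_, hX'mem⟩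
      · intro hcon
        have : x ∈ X \ {y} := Finset.mem_sdiff.2 ⟨hxX, by simp [hxy]⟩
        rw [← hcon] at this
        exact hxX' this
      · intro hcon
        have : x ∈ X' := by rw [hcon]; exact Finset.mem_insert_self x {y}
        exact hxX' this
      · intro hcon
        have : x ∈ X' := by rw [hcon]; exact Finset.mem_singleton_self x
        exact hxX' this
    have hX'img : X' ∈ S₂.image (· ∩ X') :=
      Finset.mem_image.2 ⟨X', hX'S₂, Finset.inter_self X'⟩
    have L2card : (rSys S X').card = S₂.card - 1 := by
      rw [L2, Finset.card_erase_of_mem hX'img, Finset.card_image_of_injOn L1]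
    have hpos : 0 < S₂.card := Finset.card_pos.2 ⟨X', hX'S₂⟩
    omega
  · -- base case : m = 2 or m = 3
    have hSeq : S = (X.powerset.erase ∅).erase X := by
      ext A
      simp only [Finset.mem_erase, Finset.mem_powerset]
      constructor
      · intro hA
        exact ⟨hS.ne_ground hA, hS.ne_empty hA, hS.subset hA⟩
      · rintro ⟨hne1, hne2, hsub⟩
        have hlt : A.card < X.card := Finset.card_lt_card (ssubset_of_subset_of_ne hsub hne1)
        have hpos : 0 < A.card := Finset.card_pos.2 (Finset.nonempty_iff_ne_empty.2 hne2)
        by_cases h1 : A.card = 1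
        · obtain ⟨a, rfl⟩ := Finset.card_eq_one.1 h1
          exact hS.singleton_mem (hsub (Finset.mem_singleton_self a))
        · have h2' : A.card = 2 := by omega
          have hXA : (X \ A).card = 1 := by
            rw [Finset.card_sdiff_of_subset hsub]
            omega
          obtain ⟨a, ha⟩ := Finset.card_eq_one.1 hXA
          have haX : a ∈ X := by
            have : a ∈ X \ A := ha ▸ Finset.mem_singleton_self a
            exact (Finset.mem_sdiff.1 this).1
          have hAeq : A = X \ {a} := by
            rw [← ha, sdiff_sdiff_eq hsub]
          rw [hAeq]
          exact hS.sdiff_mem (hS.singleton_mem haX)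
    have hXne : X ≠ ∅ := by
      intro h
      rw [h, Finset.card_empty] at hm
      omega
    have hXps : X ∈ X.powerset.erase ∅ :=
      Finset.mem_erase.2 ⟨hXne, Finset.mem_powerset_self X⟩
    have c1 : (X.powerset.erase ∅).card = 2 ^ m - 1 := by
      rw [Finset.card_erase_of_mem (Finset.empty_mem_powerset X), Finset.card_powerset, hm]
    have c2 : S.card = 2 ^ m - 2 := by
      rw [hSeq, Finset.card_erase_of_mem hXps, c1]
      omega
    have hm23 : m = 2 ∨ m = 3 := by omega
    rcases hm23 with rfl | rfl <;> simp [c2]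

/-! ### Doubled pairs: uniqueness and existence -/

lemma strict_double_impossible {X : Finset (Fin n)} {S : Finset (Finset (Fin n))}
    {A W V : Finset (Fin n)} (hS : IsSys X S) (hA : A ∈ S)
    (hW : W ∈ S) (hWA : W ⊆ A) (hWneA : W ≠ A)
    (hV2 : A \ V ∈ S) (hVne : V ≠ ∅) (hVW : V ⊂ W) : False := by
  rcases hS.compat hW hV2 with h | h | h | h
  · -- W ⊆ A \ V, but V ⊆ W
    obtain ⟨v, hv⟩ := Finset.nonempty_iff_ne_empty.2 hVne
    exact (Finset.mem_sdiff.1 (h (hVW.1 hv))).2 hv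
  · -- A \ V ⊆ W forces A ⊆ W
    apply hWneA
    apply Finset.Subset.antisymm hWA
    intro z hz
    by_cases hzV : z ∈ V
    · exact hVW.1 hzV
    · exact h (Finset.mem_sdiff.2 ⟨hz, hzV⟩)
  · -- Disjoint W (A \ V) forces W ⊆ V
    have hWV : W ⊆ V := by
      intro z hz
      by_contra hzV
      exact (Finset.disjoint_left.1 h hz) (Finset.mem_sdiff.2 ⟨hWA hz, hzV⟩)
    exact hVW.2 hWV
  · -- W ∪ (A \ V) = X forces A = X
    apply hS.ne_ground hA
    apply Finset.Subset.antisymm (hS.subset hA)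
    rw [← h]
    exact Finset.union_subset hWA Finset.sdiff_subset

lemma double_unique {X : Finset (Fin n)} {S : Finset (Finset (Fin n))}
    {A W V : Finset (Fin n)} (hS : IsSys X S) (hA : A ∈ S)
    (hW : W ∈ S) (hW2 : A \ W ∈ S) (hWA : W ⊆ A) (hWne : W ≠ ∅) (hWneA : W ≠ A)
    (hV : V ∈ S) (hV2 : A \ V ∈ S) (hVA : V ⊆ A) (hVne : V ≠ ∅) (hVneA : V ≠ A) :
    V = W ∨ V = A \ W := by
  have hAWne : A \ W ≠ A := by
    intro h
    apply hWne
    have := sdiff_sdiff_eq hWA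
    rw [h, Finset.sdiff_self] at this
    exact this.symm
  rcases hS.compat hV hW with h | h | h | h
  · by_cases hVWeq : V = W
    · exact Or.inl hVWeq
    · exact absurd (strict_double_impossible hS hA hW hWA hWneA hV2 hVne
        (Finset.ssubset_iff_subset_ne.2 ⟨h, hVWeq⟩)) (by simp)
  · by_cases hVWeq : W = V
    · exact Or.inl hVWeq.symm
    · exact absurd (strict_double_impossible hS hA hV hVA hVneA hW2 hWne
        (Finset.ssubset_iff_subset_ne.2 ⟨h, hVWeq⟩)) (by simp)
  · have hVAW : V ⊆ A \ W := Finset.subset_sdiff.2 ⟨hVA, h⟩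
    by_cases hVWeq : V = A \ W
    · exact Or.inr hVWeq
    · exact absurd (strict_double_impossible hS hA hW2 Finset.sdiff_subset hAWne
        hV2 hVne (Finset.ssubset_iff_subset_ne.2 ⟨hVAW, hVWeq⟩)) (by simp)
  · exfalso
    apply hS.ne_ground hA
    apply Finset.Subset.antisymm (hS.subset hA)
    rw [← h]
    exact Finset.union_subset hVA hWA

lemma mem_or_sdiff_mem {X : Finset (Fin n)} {S : Finset (Finset (Fin n))}
    {A W : Finset (Fin n)} (hS : IsSys X S) (hA : A ∈ S) (hW : W ∈ rSys S A) :
    W ∈ S ∨ A \ W ∈ S := by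
  rcases mem_rSys.1 hW with ⟨hWA, hWne, V, hV, rfl⟩
  rcases hS.compat hV hA with h | h | h | h
  · left
    rwa [Finset.inter_eq_left.2 h]
  · exact absurd (Finset.inter_eq_right.2 h) hWA
  · exact absurd (Finset.disjoint_iff_inter_eq_empty.1 h) hWne
  · right
    have heq : A \ (V ∩ A) = (X \ V) ∩ A := by
      ext z
      simp only [Finset.mem_sdiff, Finset.mem_inter]
      constructor
      · rintro ⟨hzA, hz⟩
        exact ⟨⟨hS.subset hA hzA, fun hv => hz ⟨hv, hzA⟩⟩, hzA⟩
      · rintro ⟨⟨_, hzV⟩, hzA⟩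
        exact ⟨hzA, fun hc => hzV hc.1⟩
    rw [heq]
    have : X \ V ∈ S := hS.sdiff_mem hV
    rwa [Finset.inter_eq_left.2 (sdiff_subset_of_union (by rw [Finset.union_comm]; exact h))]

/-! ### Side counts on ground set `univ` -/

def sideF (S : Finset (Finset (Fin n))) (A : Finset (Fin n)) : Finset (Finset (Fin n)) :=
  S.filter (fun C => C ⊆ A ∧ C ≠ A)

lemma mem_sideF {S : Finset (Finset (Fin n))} {A C : Finset (Fin n)} :
    C ∈ sideF S A ↔ C ∈ S ∧ C ⊆ A ∧ C ≠ A := by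
  simp [sideF]

lemma sdiff_ne_self_of_ne_empty {A W : Finset (Fin n)} (hWA : W ⊆ A) (hWne : W ≠ ∅) :
    A \ W ≠ A := by
  intro h
  apply hWne
  have := sdiff_sdiff_eq hWA
  rw [h, Finset.sdiff_self] at this
  exact this.symm

lemma sideF_subset_rSys {S : Finset (Finset (Fin n))} {A : Finset (Fin n)}
    (hS : IsSys Finset.univ S) (hA : A ∈ S) : sideF S A ⊆ rSys S A := by
  intro C hC
  obtain ⟨hCS, hCA, hCneA⟩ := mem_sideF.1 hC
  exact mem_rSys_of_mem hCS hCA (hS.ne_empty hCS) hCneA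

lemma sideF_union_image (hS : IsSys Finset.univ S) {A : Finset (Fin n)} (hA : A ∈ S) :
    sideF S A ∪ (sideF S A).image (A \ ·) = rSys S A := by
  apply Finset.Subset.antisymm
  · apply Finset.union_subset (sideF_subset_rSys hS hA)
    intro W hW
    obtain ⟨V, hV, rfl⟩ := Finset.mem_image.1 hW
    exact sdiff_mem_rSys hS hA (sideF_subset_rSys hS hA hV)
  · intro W hW
    have hWA : W ⊆ A := rSys_subset hW
    have hWne : W ≠ ∅ := (mem_rSys.1 hW).2.1
    have hWneA : W ≠ A := (mem_rSys.1 hW).1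
    rcases mem_or_sdiff_mem hS hA hW with h | h
    · exact Finset.mem_union.2 (Or.inl (mem_sideF.2 ⟨h, hWA, hWneA⟩))
    · refine Finset.mem_union.2 (Or.inr (Finset.mem_image.2 ⟨A \ W, ?_, ?_⟩))
      · exact mem_sideF.2 ⟨h, Finset.sdiff_subset, sdiff_ne_self_of_ne_empty hWA hWne⟩
      · exact sdiff_sdiff_eq hWA

lemma sideF_card_eq (hS : IsSys Finset.univ S) {A : Finset (Fin n)} (hA : A ∈ S)
    (h2 : 2 ≤ A.card) :
    2 * (sideF S A).card =
      (4 * A.card - 6) + ((sideF S A) ∩ (sideF S A).image (A \ ·)).card ∧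
    ((sideF S A) ∩ (sideF S A).image (A \ ·)).card ≤ 2 := by
  have hinj : Set.InjOn (A \ ·) ↑(sideF S A) := by
    intro W hW V hV h
    have hWA := (mem_sideF.1 (Finset.mem_coe.1 hW)).2.1
    have hVA := (mem_sideF.1 (Finset.mem_coe.1 hV)).2.1
    have h' : A \ W = A \ V := h
    rw [← sdiff_sdiff_eq hWA, ← sdiff_sdiff_eq hVA, h']
  have himgcard : ((sideF S A).image (A \ ·)).card = (sideF S A).card :=
    Finset.card_image_of_injOn hinj
  have hrcard : (rSys S A).card + 6 = 4 * A.card := by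
    have := isSys_rSys hS hA h2
    exact sys_card_aux A.card A (rSys S A) rfl this h2
  have hkey := Finset.card_union_add_card_inter (sideF S A) ((sideF S A).image (A \ ·))
  rw [sideF_union_image hS hA, himgcard] at hkey
  -- intersection card bound via uniqueness of doubles
  have hDle : ((sideF S A) ∩ (sideF S A).image (A \ ·)).card ≤ 2 := by
    set D := (sideF S A) ∩ (sideF S A).image (A \ ·) with hD
    have hDprop : ∀ W ∈ D, W ∈ S ∧ A \ W ∈ S ∧ W ⊆ A ∧ W ≠ ∅ ∧ W ≠ A := by
      intro W hW
      obtain ⟨hW1, hW2⟩ := Finset.mem_inter.1 hW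
      obtain ⟨hWS, hWA, hWneA⟩ := mem_sideF.1 hW1
      obtain ⟨V, hV, rfl⟩ := Finset.mem_image.1 hW2
      obtain ⟨hVS, hVA, -⟩ := mem_sideF.1 hV
      refine ⟨hWS, ?_, hWA, hS.ne_empty hWS, hWneA⟩
      rw [sdiff_sdiff_eq hVA]
      exact hVS
    rcases Finset.eq_empty_or_nonempty D with h | ⟨W₀, hW₀⟩
    · simp [h]
    · have hsub : D ⊆ {W₀, A \ W₀} := by
        intro V hV
        obtain ⟨hW₀S, hW₀2, hW₀A, hW₀ne, hW₀neA⟩ := hDprop W₀ hW₀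
        obtain ⟨hVS, hV2, hVA, hVne, hVneA⟩ := hDprop V hV
        rcases double_unique hS hA hW₀S hW₀2 hW₀A hW₀ne hW₀neA hVS hV2 hVA hVne hVneA with
          h | h
        · exact Finset.mem_insert.2 (Or.inl h)
        · exact Finset.mem_insert.2 (Or.inr (Finset.mem_singleton.2 h))
      calc D.card ≤ ({W₀, A \ W₀} : Finset (Finset (Fin n))).card := Finset.card_le_card hsub
        _ ≤ 2 := Finset.card_insert_le _ _ |>.trans (by simp)
  exact ⟨by omega, hDle⟩

lemma sideF_card_bound (hS : IsSys Finset.univ S) {A : Finset (Fin n)} (hA : A ∈ S) :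
    (sideF S A).card + 2 ≤ 2 * A.card := by
  by_cases h2 : 2 ≤ A.card
  · obtain ⟨heq, hle⟩ := sideF_card_eq hS hA h2
    omega
  · have h1 : A.card = 1 := by
      have := Finset.card_pos.2 (hS.nonempty hA)
      omega
    have : sideF S A = ∅ := by
      rw [Finset.eq_empty_iff_forall_notMem]
      intro C hC
      obtain ⟨hCS, hCA, hCneA⟩ := mem_sideF.1 hC
      obtain ⟨a, rfl⟩ := Finset.card_eq_one.1 h1
      rcases Finset.subset_singleton_iff.1 hCA with rfl | rfl
      · exact hS.ne_empty hCS rfl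
      · exact hCneA rfl
    rw [this, Finset.card_empty]
    omega

lemma side_partition (hS : IsSys Finset.univ S) {A : Finset (Fin n)} (hA : A ∈ S) :
    S.card = 2 + (sideF S A).card * 2 + (sideF S (Finset.univ \ A)).card * 2 := by
  classical
  set B := Finset.univ \ A with hBdef
  have hB : B ∈ S := hS.sdiff_mem hA
  have hAB : A ≠ B := by
    intro h
    obtain ⟨a, ha⟩ := hS.nonempty hA
    have : a ∈ B := h ▸ ha
    rw [hBdef] at this
    exact (Finset.mem_sdiff.1 this).2 ha
  have hdisjAB : Disjoint A B := by
    rw [hBdef]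
    exact Finset.disjoint_sdiff
  have hunAB : A ∪ B = Finset.univ := by
    rw [hBdef]
    exact union_sdiff_of_subset (Finset.subset_univ A) Finset.Subset.rfl
  set u3 := S.filter (fun C => A ⊆ C ∧ C ≠ A) with hu3
  set u4 := S.filter (fun C => B ⊆ C ∧ C ≠ B) with hu4
  have hSeq : S = ((sideF S A ∪ sideF S B) ∪ (u3 ∪ u4)) ∪ {A, B} := by
    ext C
    simp only [Finset.mem_union, mem_sideF, hu3, hu4, Finset.mem_filter,
      Finset.mem_insert, Finset.mem_singleton]
    constructor
    · intro hC
      rcases hS.compat hC hA with h | h | h | h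
      · by_cases hCA : C = A
        · exact Or.inr (Or.inl hCA)
        · exact Or.inl (Or.inl (Or.inl ⟨hC, h, hCA⟩))
      · by_cases hCA : C = A
        · exact Or.inr (Or.inl hCA)
        · exact Or.inl (Or.inr (Or.inl ⟨hC, h, hCA⟩))
      · by_cases hCB : C = B
        · exact Or.inr (Or.inr hCB)
        · refine Or.inl (Or.inl (Or.inr ⟨hC, ?_, hCB⟩))
          rw [hBdef]
          exact subset_sdiff_of_disjoint (Finset.subset_univ C) h
      · by_cases hCB : C = B
        · exact Or.inr (Or.inr hCB)
        · refine Or.inl (Or.inr (Or.inr ⟨hC, ?_, hCB⟩))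
          rw [hBdef]
          exact sdiff_subset_of_union h
    · intro hC
      rcases hC with ((⟨h, -, -⟩ | ⟨h, -, -⟩) | (⟨h, -, -⟩ | ⟨h, -, -⟩)) | rfl | rfl
      · exact h
      · exact h
      · exact h
      · exact h
      · exact hA
      · exact hB
  have hd1 : Disjoint (sideF S A) (sideF S B) := by
    rw [Finset.disjoint_left]
    intro C hC1 hC2
    obtain ⟨hCS, hCA, -⟩ := mem_sideF.1 hC1
    obtain ⟨-, hCB, -⟩ := mem_sideF.1 hC2
    obtain ⟨c, hc⟩ := hS.nonempty hCS
    exact Finset.disjoint_left.1 hdisjAB (hCA hc) (hCB hc)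
  have hd3 : Disjoint u3 u4 := by
    rw [Finset.disjoint_left]
    intro C hC1 hC2
    obtain ⟨hCS, hAC, hCneA⟩ := Finset.mem_filter.1 hC1
    obtain ⟨-, hBC, -⟩ := Finset.mem_filter.1 hC2
    apply hS.ne_ground hCS
    apply Finset.Subset.antisymm (hS.subset hCS)
    rw [← hunAB]
    exact Finset.union_subset hAC hBC
  have hd2 : Disjoint (sideF S A ∪ sideF S B) (u3 ∪ u4) := by
    rw [Finset.disjoint_left]
    intro C hC1 hC2
    rcases Finset.mem_union.1 hC1 with h1 | h1 <;>
      rcases Finset.mem_union.1 hC2 with h2 | h2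
    · obtain ⟨-, hCA, hCneA⟩ := mem_sideF.1 h1
      obtain ⟨-, hAC, -⟩ := Finset.mem_filter.1 h2
      exact hCneA (Finset.Subset.antisymm hCA hAC)
    · obtain ⟨-, hCA, -⟩ := mem_sideF.1 h1
      obtain ⟨-, hBC, -⟩ := Finset.mem_filter.1 h2
      obtain ⟨b, hb⟩ := hS.nonempty hB
      exact Finset.disjoint_left.1 hdisjAB (hCA (hBC hb)) hb
    · obtain ⟨-, hCB, -⟩ := mem_sideF.1 h1
      obtain ⟨-, hAC, -⟩ := Finset.mem_filter.1 h2
      obtain ⟨a, ha⟩ := hS.nonempty hA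
      exact Finset.disjoint_left.1 hdisjAB ha (hCB (hAC ha))
    · obtain ⟨-, hCB, hCneB⟩ := mem_sideF.1 h1
      obtain ⟨-, hBC, -⟩ := Finset.mem_filter.1 h2
      exact hCneB (Finset.Subset.antisymm hCB hBC)
  have hd4 : Disjoint ((sideF S A ∪ sideF S B) ∪ (u3 ∪ u4)) ({A, B} : Finset (Finset (Fin n))) := by
    rw [Finset.disjoint_right]
    intro C hC hC2
    rcases Finset.mem_insert.1 hC with rfl | hC'
    · rcases Finset.mem_union.1 hC2 with h1 | h1
      · rcases Finset.mem_union.1 h1 with h2 | h2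
        · exact (mem_sideF.1 h2).2.2 rfl
        · obtain ⟨-, hCB, -⟩ := mem_sideF.1 h2
          obtain ⟨a, ha⟩ := hS.nonempty hA
          exact Finset.disjoint_left.1 hdisjAB ha (hCB ha)
      · rcases Finset.mem_union.1 h1 with h2 | h2
        · exact (Finset.mem_filter.1 h2).2.2 rfl
        · obtain ⟨-, hBC, -⟩ := Finset.mem_filter.1 h2
          obtain ⟨b, hb⟩ := hS.nonempty hB
          exact Finset.disjoint_left.1 hdisjAB (hBC hb) hb
    · rcases Finset.mem_singleton.1 hC' with rfl
      rcases Finset.mem_union.1 hC2 with h1 | h1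
      · rcases Finset.mem_union.1 h1 with h2 | h2
        · obtain ⟨-, hCA, -⟩ := mem_sideF.1 h2
          obtain ⟨b, hb⟩ := hS.nonempty hB
          exact Finset.disjoint_left.1 hdisjAB (hCA hb) hb
        · exact (mem_sideF.1 h2).2.2 rfl
      · rcases Finset.mem_union.1 h1 with h2 | h2
        · obtain ⟨-, hAC, -⟩ := Finset.mem_filter.1 h2
          obtain ⟨a, ha⟩ := hS.nonempty hA
          exact Finset.disjoint_left.1 hdisjAB ha (hAC ha)
        · exact (Finset.mem_filter.1 h2).2.2 rfl
  -- bijections u3 ≃ sideF S B and u4 ≃ sideF S A via complement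
  have hc3 : u3.card = (sideF S B).card := by
    apply Finset.card_nbij' (fun C => Finset.univ \ C) (fun C => Finset.univ \ C)
    · intro C hC
      obtain ⟨hCS, hAC, hCneA⟩ := Finset.mem_filter.1 hC
      refine mem_sideF.2 ⟨hS.sdiff_mem hCS, ?_, ?_⟩
      · rw [hBdef]
        intro z hz
        obtain ⟨hz1, hz2⟩ := Finset.mem_sdiff.1 hz
        exact Finset.mem_sdiff.2 ⟨hz1, fun ha => hz2 (hAC ha)⟩
      · rw [hBdef]
        intro h
        apply hCneA
        have := congrArg (fun T => Finset.univ \ T) h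
        simpa [sdiff_sdiff_eq (hS.subset hCS), sdiff_sdiff_eq (Finset.subset_univ A)] using this
    · intro C hC
      obtain ⟨hCS, hCB, hCneB⟩ := mem_sideF.1 hC
      refine Finset.mem_filter.2 ⟨hS.sdiff_mem hCS, ?_, ?_⟩
      · intro z hz
        refine Finset.mem_sdiff.2 ⟨Finset.mem_univ z, fun hc => ?_⟩
        have : z ∈ B := hCB hc
        rw [hBdef] at this
        exact (Finset.mem_sdiff.1 this).2 hz
      · intro h
        apply hCneB
        have := congrArg (fun T => Finset.univ \ T) h
        simpa [sdiff_sdiff_eq (hS.subset hCS), hBdef] using this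
    · intro C hC
      exact sdiff_sdiff_eq (hS.subset (Finset.mem_filter.1 hC).1)
    · intro C hC
      exact sdiff_sdiff_eq (hS.subset (mem_sideF.1 hC).1)
  have hc4 : u4.card = (sideF S A).card := by
    apply Finset.card_nbij' (fun C => Finset.univ \ C) (fun C => Finset.univ \ C)
    · intro C hC
      obtain ⟨hCS, hBC, hCneB⟩ := Finset.mem_filter.1 hC
      refine mem_sideF.2 ⟨hS.sdiff_mem hCS, ?_, ?_⟩
      · intro z hz
        obtain ⟨hz1, hz2⟩ := Finset.mem_sdiff.1 hz
        by_contra hzA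
        have : z ∈ B := by
          rw [hBdef]
          exact Finset.mem_sdiff.2 ⟨hz1, hzA⟩
        exact hz2 (hBC this)
      · intro h
        apply hCneB
        simp only at h
        rw [← sdiff_sdiff_eq (hS.subset hCS), h, hBdef]
    · intro C hC
      obtain ⟨hCS, hCA, hCneA⟩ := mem_sideF.1 hC
      refine Finset.mem_filter.2 ⟨hS.sdiff_mem hCS, ?_, ?_⟩
      · rw [hBdef]
        intro z hz
        obtain ⟨hz1, hz2⟩ := Finset.mem_sdiff.1 hz
        exact Finset.mem_sdiff.2 ⟨hz1, fun hc => hz2 (hCA hc)⟩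
      · rw [hBdef]
        intro h
        apply hCneA
        have := congrArg (fun T => Finset.univ \ T) h
        simpa [sdiff_sdiff_eq (hS.subset hCS), sdiff_sdiff_eq (Finset.subset_univ A)] using this
    · intro C hC
      exact sdiff_sdiff_eq (hS.subset (Finset.mem_filter.1 hC).1)
    · intro C hC
      exact sdiff_sdiff_eq (hS.subset (mem_sideF.1 hC).1)
  have hcpair : ({A, B} : Finset (Finset (Fin n))).card = 2 := Finset.card_pair hAB
  have hfin : S.card = ((sideF S A).card + (sideF S B).card) + (u3.card + u4.card) + 2 := by
    conv_lhs => rw [hSeq]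
    rw [Finset.card_union_of_disjoint hd4, Finset.card_union_of_disjoint hd2,
      Finset.card_union_of_disjoint hd1, Finset.card_union_of_disjoint hd3, hcpair]
  omega

lemma exists_double (hS : IsSys Finset.univ S) (hn : 4 ≤ n) {A : Finset (Fin n)}
    (hA : A ∈ S) (h2 : 2 ≤ A.card) :
    ∃ Y, Y ∈ S ∧ A \ Y ∈ S ∧ Y ⊆ A ∧ Y ≠ ∅ ∧ Y ≠ A := by
  have hcardU : (Finset.univ : Finset (Fin n)).card = n := by simp
  have hStot : S.card + 6 = 4 * n := sys_card_aux n Finset.univ S hcardU hS (by omega)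
  have hB : Finset.univ \ A ∈ S := hS.sdiff_mem hA
  have hBcard : (Finset.univ \ A).card = n - A.card := by
    rw [Finset.card_sdiff_of_subset (Finset.subset_univ A), hcardU]
  have hAlt : A.card < n := by
    have := Finset.card_lt_card (hS.ssubset hA)
    omega
  have hApos : 0 < A.card := Finset.card_pos.2 (hS.nonempty hA)
  have hpart := side_partition hS hA
  have hbB := sideF_card_bound hS hB
  obtain ⟨heqA, hDleA⟩ := sideF_card_eq hS hA h2
  have hDpos : 0 < ((sideF S A) ∩ (sideF S A).image (A \ ·)).card := by omega
  obtain ⟨Y, hY⟩ := Finset.card_pos.1 hDpos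
  obtain ⟨hY1, hY2⟩ := Finset.mem_inter.1 hY
  obtain ⟨hYS, hYA, hYneA⟩ := mem_sideF.1 hY1
  obtain ⟨V, hV, rfl⟩ := Finset.mem_image.1 hY2
  obtain ⟨hVS, hVA, -⟩ := mem_sideF.1 hV
  refine ⟨A \ V, hYS, ?_, hYA, hS.ne_empty hYS, hYneA⟩
  rw [sdiff_sdiff_eq hVA]
  exact hVS

/-! ### The reconnection construction -/

def half (S : Finset (Finset (Fin n))) (A Y : Finset (Fin n)) : Finset (Finset (Fin n)) :=
  (rSys S A).filter (fun W => W ⊆ Y ∨ W ⊆ A \ Y)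

def bC (S : Finset (Finset (Fin n))) (A Y Z : Finset (Fin n)) : Finset (Finset (Fin n)) :=
  {A, Finset.univ \ A} ∪ (half S A Y ∪ half S (Finset.univ \ A) Z)

def bSides (S : Finset (Finset (Fin n))) (A Y Z : Finset (Fin n)) : Finset (Finset (Fin n)) :=
  bC S A Y Z ∪ (bC S A Y Z).image (Finset.univ \ ·)

lemma mem_half {S : Finset (Finset (Fin n))} {A Y W : Finset (Fin n)} :
    W ∈ half S A Y ↔ W ∈ rSys S A ∧ (W ⊆ Y ∨ W ⊆ A \ Y) := by
  simp [half]

lemma univ_sdiff_sdiff (A : Finset (Fin n)) : Finset.univ \ (Finset.univ \ A) = A :=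
  sdiff_sdiff_eq (Finset.subset_univ A)

lemma sdiff_univ_ne_empty {D : Finset (Fin n)} (h : D ≠ Finset.univ) :
    Finset.univ \ D ≠ ∅ := by
  intro hc
  apply h
  apply Finset.Subset.antisymm (Finset.subset_univ D)
  intro z _
  by_contra hz
  exact Finset.eq_empty_iff_forall_notMem.1 hc z (Finset.mem_sdiff.2 ⟨Finset.mem_univ z, hz⟩)

lemma sdiff_univ_ne_univ {D : Finset (Fin n)} (h : D ≠ ∅) :
    Finset.univ \ D ≠ Finset.univ := by
  intro hc
  obtain ⟨d, hd⟩ := Finset.nonempty_iff_ne_empty.2 h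
  have : d ∈ Finset.univ \ D := by rw [hc]; exact Finset.mem_univ d
  exact (Finset.mem_sdiff.1 this).2 hd

lemma bC_comm (S : Finset (Finset (Fin n))) (A Y Z : Finset (Fin n)) :
    bC S (Finset.univ \ A) Z Y = bC S A Y Z := by
  unfold bC
  rw [univ_sdiff_sdiff, Finset.pair_comm, Finset.union_comm (half S (Finset.univ \ A) Z)]

lemma bSides_comm (S : Finset (Finset (Fin n))) (A Y Z : Finset (Fin n)) :
    bSides S (Finset.univ \ A) Z Y = bSides S A Y Z := by
  unfold bSides
  rw [bC_comm]

lemma mem_bSides {S : Finset (Finset (Fin n))} {A Y Z C : Finset (Fin n)} :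
    C ∈ bSides S A Y Z ↔ C ∈ bC S A Y Z ∨ Finset.univ \ C ∈ bC S A Y Z := by
  simp only [bSides, Finset.mem_union, Finset.mem_image]
  constructor
  · rintro (h | ⟨D, hD, rfl⟩)
    · exact Or.inl h
    · right
      rwa [univ_sdiff_sdiff]
  · rintro (h | h)
    · exact Or.inl h
    · right
      exact ⟨Finset.univ \ C, h, univ_sdiff_sdiff C⟩

lemma bSides_compl {S : Finset (Finset (Fin n))} {A Y Z C : Finset (Fin n)}
    (h : C ∈ bSides S A Y Z) : Finset.univ \ C ∈ bSides S A Y Z := by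
  rcases mem_bSides.1 h with h | h
  · exact mem_bSides.2 (Or.inr (by rwa [univ_sdiff_sdiff]))
  · exact mem_bSides.2 (Or.inl h)

lemma rSys_card_two {S : Finset (Finset (Fin n))} {A W : Finset (Fin n)}
    (hW : W ∈ rSys S A) : 2 ≤ A.card := by
  have h1 : W ⊆ A := rSys_subset hW
  have h2 : W ≠ ∅ := (mem_rSys.1 hW).2.1
  have h3 : W ≠ A := (mem_rSys.1 hW).1
  have hlt := Finset.card_lt_card (Finset.ssubset_iff_subset_ne.2 ⟨h1, h3⟩)
  have hpos := Finset.card_pos.2 (Finset.nonempty_iff_ne_empty.2 h2)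
  omega

lemma bC_proper {S : Finset (Finset (Fin n))} {A Y Z : Finset (Fin n)}
    (hS : IsSys Finset.univ S) (hA : A ∈ S) :
    ∀ C ∈ bC S A Y Z, C ≠ ∅ ∧ C ≠ Finset.univ := by
  intro C hC
  have hAne := hS.ne_empty hA
  have hAnu := hS.ne_ground hA
  rcases Finset.mem_union.1 hC with h | h
  · rcases Finset.mem_insert.1 h with rfl | h
    · exact ⟨hAne, hAnu⟩
    · rw [Finset.mem_singleton.1 h]
      exact ⟨sdiff_univ_ne_empty hAnu, sdiff_univ_ne_univ hAne⟩
  · have key : ∀ (A' W : Finset (Fin n)), A' ≠ Finset.univ → W ∈ rSys S A' →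
        W ≠ ∅ ∧ W ≠ Finset.univ := by
      intro A' W hA'nu hr
      refine ⟨(mem_rSys.1 hr).2.1, ?_⟩
      intro hc
      apply hA'nu
      apply Finset.Subset.antisymm (Finset.subset_univ A')
      rw [← hc]
      exact rSys_subset hr
    rcases Finset.mem_union.1 h with h | h
    · exact key A C hAnu (mem_half.1 h).1
    · exact key _ C (sdiff_univ_ne_univ hAne) (mem_half.1 h).1

lemma bSides_proper {S : Finset (Finset (Fin n))} {A Y Z : Finset (Fin n)}
    (hS : IsSys Finset.univ S) (hA : A ∈ S) :
    ∀ C ∈ bSides S A Y Z, C ≠ ∅ ∧ C ≠ Finset.univ := by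
  intro C hC
  rcases mem_bSides.1 hC with h | h
  · exact bC_proper hS hA C h
  · obtain ⟨h1, h2⟩ := bC_proper hS hA _ h
    constructor
    · intro hc
      subst hc
      rw [Finset.sdiff_empty] at h2
      exact h2 rfl
    · intro hc
      subst hc
      rw [Finset.sdiff_self] at h1
      exact h1 rfl

/-- singletons are members -/
lemma bSides_singleton {S : Finset (Finset (Fin n))} {A Y Z : Finset (Fin n)}
    (hS : IsSys Finset.univ S) (hA : A ∈ S)
    (x : Fin n) : ({x} : Finset (Fin n)) ∈ bSides S A Y Z := by
  have hB : Finset.univ \ A ∈ S := hS.sdiff_mem hA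
  have key : ∀ (A' Y' : Finset (Fin n)), A' ∈ S → x ∈ A' →
      ({x} : Finset (Fin n)) ∈ half S A' Y' ∨ ({x} : Finset (Fin n)) = A' := by
    intro A' Y' hA' hx
    by_cases h1 : ({x} : Finset (Fin n)) = A'
    · exact Or.inr h1
    · left
      have hr : ({x} : Finset (Fin n)) ∈ rSys S A' :=
        mem_rSys_of_mem (hS.singleton_mem (Finset.mem_univ x))
          (Finset.singleton_subset_iff.2 hx) (Finset.singleton_ne_empty x) h1
      refine mem_half.2 ⟨hr, ?_⟩
      by_cases hxY : x ∈ Y'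
      · exact Or.inl (Finset.singleton_subset_iff.2 hxY)
      · exact Or.inr (Finset.singleton_subset_iff.2 (Finset.mem_sdiff.2 ⟨hx, hxY⟩))
  by_cases hx : x ∈ A
  · rcases key A Y hA hx with h | h
    · exact mem_bSides.2 (Or.inl (Finset.mem_union.2 (Or.inr (Finset.mem_union.2 (Or.inl h)))))
    · rw [h]
      exact mem_bSides.2 (Or.inl (Finset.mem_union.2 (Or.inl (Finset.mem_insert_self _ _))))
  · have hx' : x ∈ Finset.univ \ A := Finset.mem_sdiff.2 ⟨Finset.mem_univ x, hx⟩
    rcases key _ Z hB hx' with h | h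
    · exact mem_bSides.2 (Or.inl (Finset.mem_union.2 (Or.inr (Finset.mem_union.2 (Or.inr h)))))
    · rw [h]
      exact mem_bSides.2 (Or.inl (Finset.mem_union.2 (Or.inl
        (Finset.mem_insert.2 (Or.inr (Finset.mem_singleton_self _))))))

section BuildAxioms

variable {S : Finset (Finset (Fin n))} {A Y Z : Finset (Fin n)}

lemma A_mem_bSides : A ∈ bSides S A Y Z :=
  mem_bSides.2 (Or.inl (Finset.mem_union.2 (Or.inl (Finset.mem_insert_self _ _))))

lemma B_mem_bSides : Finset.univ \ A ∈ bSides S A Y Z :=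
  mem_bSides.2 (Or.inl (Finset.mem_union.2 (Or.inl
    (Finset.mem_insert.2 (Or.inr (Finset.mem_singleton_self _))))))

lemma halfA_subset_bSides : half S A Y ⊆ bSides S A Y Z := by
  intro W hW
  exact mem_bSides.2 (Or.inl (Finset.mem_union.2 (Or.inr (Finset.mem_union.2 (Or.inl hW)))))

lemma halfB_subset_bSides : half S (Finset.univ \ A) Z ⊆ bSides S A Y Z := by
  intro W hW
  exact mem_bSides.2 (Or.inl (Finset.mem_union.2 (Or.inr (Finset.mem_union.2 (Or.inr hW)))))

lemma mem_bC_iff {C : Finset (Fin n)} :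
    C ∈ bC S A Y Z ↔ C = A ∨ C = Finset.univ \ A ∨
      C ∈ half S A Y ∨ C ∈ half S (Finset.univ \ A) Z := by
  simp [bC, Finset.mem_union, Finset.mem_insert, Finset.mem_singleton, or_assoc]

lemma compat_half_half (hS : IsSys Finset.univ S) {A' Y' : Finset (Fin n)} (hA' : A' ∈ S)
    (hY' : 2 ≤ A'.card → Y' ∈ rSys S A') :
    ∀ W ∈ half S A' Y', ∀ V ∈ half S A' Y', CompatOn Finset.univ W V := by
  intro W hW V hV
  obtain ⟨hWr, hWp⟩ := mem_half.1 hW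
  obtain ⟨hVr, hVp⟩ := mem_half.1 hV
  have h2 := rSys_card_two hWr
  have hYr := hY' h2
  have hYA : Y' ⊆ A' := rSys_subset hYr
  have hYne : Y' ≠ ∅ := (mem_rSys.1 hYr).2.1
  have hYneA : Y' ≠ A' := (mem_rSys.1 hYr).1
  have hAu : A' ≠ Finset.univ := hS.ne_ground hA'
  have hsys := isSys_rSys hS hA' h2
  have hsame : ∀ P : Finset (Fin n), P ⊆ A' → P ≠ A' → W ⊆ P → V ⊆ P →
      CompatOn Finset.univ W V := by
    intro P hPA hPneA hWP hVP
    rcases hsys.compat hWr hVr with h | h | h | h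
    · exact Or.inl h
    · exact Or.inr (Or.inl h)
    · exact Or.inr (Or.inr (Or.inl h))
    · exfalso
      apply hPneA
      apply Finset.Subset.antisymm hPA
      rw [← h]
      exact Finset.union_subset hWP hVP
  have hAYne : A' \ Y' ≠ A' := by
    intro hc
    apply hYne
    have h1 : Y' ∩ A' = ∅ := by
      rw [← Finset.disjoint_iff_inter_eq_empty]
      have : Disjoint (A' \ Y') Y' := Finset.sdiff_disjoint
      rw [hc] at this
      exact this.symm
    rw [Finset.inter_eq_left.2 hYA] at h1
    exact h1
  rcases hWp with hWp | hWp <;> rcases hVp with hVp | hVp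
  · exact hsame Y' hYA hYneA hWp hVp
  · refine Or.inr (Or.inr (Or.inl ?_))
    rw [Finset.disjoint_left]
    intro z hz hzV
    exact (Finset.mem_sdiff.1 (hVp hzV)).2 (hWp hz)
  · refine Or.inr (Or.inr (Or.inl ?_))
    rw [Finset.disjoint_left]
    intro z hz hzV
    exact (Finset.mem_sdiff.1 (hWp hz)).2 (hVp hzV)
  · exact hsame (A' \ Y') Finset.sdiff_subset hAYne hWp hVp

lemma compat_disj_parts {W V P Q : Finset (Fin n)} (hW : W ⊆ P) (hV : V ⊆ Q)
    (h : Disjoint P Q) : CompatOn Finset.univ W V :=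
  Or.inr (Or.inr (Or.inl (h.mono hW hV)))

lemma bC_compat (hS : IsSys Finset.univ S) (hA : A ∈ S)
    (hY : 2 ≤ A.card → Y ∈ rSys S A)
    (hZ : 2 ≤ (Finset.univ \ A).card → Z ∈ rSys S (Finset.univ \ A)) :
    ∀ C ∈ bC S A Y Z, ∀ D ∈ bC S A Y Z, CompatOn Finset.univ C D := by
  have hB : Finset.univ \ A ∈ S := hS.sdiff_mem hA
  have hdAB : Disjoint A (Finset.univ \ A) := Finset.disjoint_sdiff
  intro C hC D hD
  rcases mem_bC_iff.1 hC with rfl | rfl | hC' | hC' <;>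
    rcases mem_bC_iff.1 hD with rfl | rfl | hD' | hD'
  · exact compatOn_refl _ _
  · exact Or.inr (Or.inr (Or.inl hdAB))
  · exact Or.inr (Or.inl (rSys_subset (mem_half.1 hD').1))
  · exact compat_disj_parts Finset.Subset.rfl (rSys_subset (mem_half.1 hD').1) hdAB
  · exact Or.inr (Or.inr (Or.inl hdAB.symm))
  · exact compatOn_refl _ _
  · exact compat_disj_parts Finset.Subset.rfl (rSys_subset (mem_half.1 hD').1) hdAB.symm
  · exact Or.inr (Or.inl (rSys_subset (mem_half.1 hD').1))
  · exact Or.inl (rSys_subset (mem_half.1 hC').1)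
  · exact compat_disj_parts (rSys_subset (mem_half.1 hC').1) Finset.Subset.rfl hdAB
  · exact compat_half_half hS hA hY C hC' D hD'
  · exact compat_disj_parts (rSys_subset (mem_half.1 hC').1)
      (rSys_subset (mem_half.1 hD').1) hdAB
  · exact compat_disj_parts (rSys_subset (mem_half.1 hC').1) Finset.Subset.rfl hdAB.symm
  · exact Or.inl (rSys_subset (mem_half.1 hC').1)
  · exact compat_disj_parts (rSys_subset (mem_half.1 hC').1)
      (rSys_subset (mem_half.1 hD').1) hdAB.symm
  · exact compat_half_half hS hB hZ C hC' D hD'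

lemma bSides_compat (hS : IsSys Finset.univ S) (hA : A ∈ S)
    (hY : 2 ≤ A.card → Y ∈ rSys S A)
    (hZ : 2 ≤ (Finset.univ \ A).card → Z ∈ rSys S (Finset.univ \ A)) :
    ∀ C ∈ bSides S A Y Z, ∀ D ∈ bSides S A Y Z, CompatOn Finset.univ C D := by
  intro C hC D hD
  rcases mem_bSides.1 hC with hC' | hC' <;> rcases mem_bSides.1 hD with hD' | hD'
  · exact bC_compat hS hA hY hZ C hC' D hD'
  · rw [← univ_sdiff_sdiff D]
    exact compatOn_sdiff_right (Finset.subset_univ C) (Finset.subset_univ _)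
      (bC_compat hS hA hY hZ C hC' _ hD')
  · rw [← univ_sdiff_sdiff C]
    exact compatOn_sdiff_left (Finset.subset_univ _) (Finset.subset_univ D)
      (bC_compat hS hA hY hZ _ hC' D hD')
  · rw [← univ_sdiff_sdiff C, ← univ_sdiff_sdiff D]
    exact compatOn_sdiff_left (Finset.subset_univ _) (Finset.subset_univ _)
      (compatOn_sdiff_right (Finset.subset_univ _) (Finset.subset_univ _)
        (bC_compat hS hA hY hZ _ hC' _ hD'))

lemma half_cover (hS : IsSys Finset.univ S) (hA : A ∈ S)
    (hY : 2 ≤ A.card → Y ∈ rSys S A) :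
    ∀ U ∈ rSys S A, U ∈ half S A Y ∨ A \ U ∈ half S A Y := by
  intro U hU
  have h2 := rSys_card_two hU
  have hYr := hY h2
  have hsys := isSys_rSys hS hA h2
  rcases hsys.compat hU hYr with h | h | h | h
  · exact Or.inl (mem_half.2 ⟨hU, Or.inl h⟩)
  · right
    refine mem_half.2 ⟨sdiff_mem_rSys hS hA hU, Or.inr ?_⟩
    exact Finset.sdiff_subset_sdiff Finset.Subset.rfl h
  · exact Or.inl (mem_half.2 ⟨hU, Or.inr (Finset.subset_sdiff.2 ⟨rSys_subset hU, h⟩)⟩)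
  · right
    refine mem_half.2 ⟨sdiff_mem_rSys hS hA hU, Or.inl ?_⟩
    intro z hz
    obtain ⟨hzA, hzU⟩ := Finset.mem_sdiff.1 hz
    rcases Finset.mem_union.1 (by rw [h]; exact hzA : z ∈ U ∪ Y) with h1 | h1
    · exact absurd h1 hzU
    · exact h1

lemma bSides_max_core (hS : IsSys Finset.univ S) (hA : A ∈ S)
    (hY : 2 ≤ A.card → Y ∈ rSys S A) {C : Finset (Fin n)}
    (hC : C ⊆ A) (hCne : C ≠ ∅)
    (hcomp : ∀ D ∈ bSides S A Y Z, CompatOn Finset.univ C D) :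
    C ∈ bSides S A Y Z := by
  by_cases hCA : C = A
  · rw [hCA]; exact A_mem_bSides
  · have h2 : 2 ≤ A.card := by
      have hlt := Finset.card_lt_card (Finset.ssubset_iff_subset_ne.2 ⟨hC, hCA⟩)
      have hpos := Finset.card_pos.2 (Finset.nonempty_iff_ne_empty.2 hCne)
      omega
    have hYr := hY h2
    have hYA : Y ⊆ A := rSys_subset hYr
    have hYne : Y ≠ ∅ := (mem_rSys.1 hYr).2.1
    have hYneA : Y ≠ A := (mem_rSys.1 hYr).1
    have hAu : A ≠ Finset.univ := hS.ne_ground hA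
    have hYhalf : Y ∈ half S A Y := mem_half.2 ⟨hYr, Or.inl Finset.Subset.rfl⟩
    have hAYr : A \ Y ∈ rSys S A := sdiff_mem_rSys hS hA hYr
    have hAYhalf : A \ Y ∈ half S A Y := mem_half.2 ⟨hAYr, Or.inr Finset.Subset.rfl⟩
    have hnotuniv : ∀ P : Finset (Fin n), P ⊆ A → C ∪ P ≠ Finset.univ := by
      intro P hP hc
      apply hAu
      apply Finset.Subset.antisymm (Finset.subset_univ A)
      rw [← hc]
      exact Finset.union_subset hC hP
    have hCr : C ∈ rSys S A := by
      apply (isSys_rSys hS hA h2).maximal hC hCne hCA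
      intro U hU
      rcases half_cover hS hA hY U hU with h | h
      · rcases hcomp U (halfA_subset_bSides h) with h' | h' | h' | h'
        · exact Or.inl h'
        · exact Or.inr (Or.inl h')
        · exact Or.inr (Or.inr (Or.inl h'))
        · exact absurd h' (hnotuniv U (rSys_subset hU))
      · rcases hcomp (A \ U) (halfA_subset_bSides h) with h' | h' | h' | h'
        · refine Or.inr (Or.inr (Or.inl ?_))
          rw [Finset.disjoint_left]
          intro z hz hzU
          exact (Finset.mem_sdiff.1 (h' hz)).2 hzU
        · refine Or.inr (Or.inr (Or.inr ?_))
          apply Finset.Subset.antisymm (Finset.union_subset hC (rSys_subset hU))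
          intro z hzA
          by_cases hzU : z ∈ U
          · exact Finset.mem_union.2 (Or.inr hzU)
          · exact Finset.mem_union.2 (Or.inl (h' (Finset.mem_sdiff.2 ⟨hzA, hzU⟩)))
        · refine Or.inl ?_
          intro z hz
          by_contra hzU
          exact Finset.disjoint_left.1 h' hz (Finset.mem_sdiff.2 ⟨hC hz, hzU⟩)
        · exact absurd h' (hnotuniv (A \ U) Finset.sdiff_subset)
    have hpos : C ⊆ Y ∨ C ⊆ A \ Y := by
      rcases hcomp Y (halfA_subset_bSides hYhalf) with h | h | h | h
      · exact Or.inl h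
      · rcases hcomp (A \ Y) (halfA_subset_bSides hAYhalf) with h' | h' | h' | h'
        · exfalso
          apply hYne
          rw [Finset.eq_empty_iff_forall_notMem]
          intro z hz
          exact (Finset.mem_sdiff.1 (h' (h hz))).2 hz
        · exfalso
          apply hCA
          apply Finset.Subset.antisymm hC
          intro z hzA
          by_cases hzY : z ∈ Y
          · exact h hzY
          · exact h' (Finset.mem_sdiff.2 ⟨hzA, hzY⟩)
        · refine Or.inl ?_
          intro z hz
          by_contra hzY
          exact Finset.disjoint_left.1 h' hz (Finset.mem_sdiff.2 ⟨hC hz, hzY⟩)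
        · exact absurd h' (hnotuniv (A \ Y) Finset.sdiff_subset)
      · exact Or.inr (Finset.subset_sdiff.2 ⟨hC, h⟩)
      · exact absurd h (hnotuniv Y hYA)
    exact halfA_subset_bSides (mem_half.2 ⟨hCr, hpos⟩)

lemma bSides_maximal (hS : IsSys Finset.univ S) (hA : A ∈ S)
    (hY : 2 ≤ A.card → Y ∈ rSys S A)
    (hZ : 2 ≤ (Finset.univ \ A).card → Z ∈ rSys S (Finset.univ \ A))
    {C : Finset (Fin n)} (hC1 : C ≠ ∅) (hC2 : C ≠ Finset.univ)
    (hcomp : ∀ D ∈ bSides S A Y Z, CompatOn Finset.univ C D) :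
    C ∈ bSides S A Y Z := by
  have hB : Finset.univ \ A ∈ S := hS.sdiff_mem hA
  have hcomp' : ∀ D ∈ bSides S A Y Z, CompatOn Finset.univ (Finset.univ \ C) D :=
    fun D hD => compatOn_sdiff_left (Finset.subset_univ C) (Finset.subset_univ D) (hcomp D hD)
  have coreB : ∀ {E : Finset (Fin n)}, E ⊆ Finset.univ \ A → E ≠ ∅ →
      (∀ D ∈ bSides S A Y Z, CompatOn Finset.univ E D) → E ∈ bSides S A Y Z := by
    intro E hE hEne hEcomp
    rw [← bSides_comm S A Y Z] at hEcomp ⊢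
    exact bSides_max_core hS hB hZ hE hEne hEcomp
  have hcompl_mem : ∀ {E : Finset (Fin n)},
      Finset.univ \ E ∈ bSides S A Y Z → E ∈ bSides S A Y Z := by
    intro E h
    have := bSides_compl h
    rwa [univ_sdiff_sdiff] at this
  rcases hcomp A A_mem_bSides with h | h | h | h
  · exact bSides_max_core hS hA hY h hC1 hcomp
  · refine hcompl_mem (coreB ?_ (sdiff_univ_ne_empty hC2) hcomp')
    exact Finset.sdiff_subset_sdiff Finset.Subset.rfl h
  · exact coreB (Finset.subset_sdiff.2 ⟨Finset.subset_univ C, h⟩) hC1 hcomp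
  · refine hcompl_mem (bSides_max_core hS hA hY ?_ (sdiff_univ_ne_empty hC2) hcomp')
    exact sdiff_subset_of_union (by rwa [Finset.union_comm])

lemma isSys_bSides (hS : IsSys Finset.univ S) (hA : A ∈ S)
    (hY : 2 ≤ A.card → Y ∈ rSys S A)
    (hZ : 2 ≤ (Finset.univ \ A).card → Z ∈ rSys S (Finset.univ \ A)) :
    IsSys Finset.univ (bSides S A Y Z) :=
  ⟨fun C hC => ⟨Finset.subset_univ C, (bSides_proper hS hA C hC).1,
      (bSides_proper hS hA C hC).2⟩,
   fun _ hC => bSides_compl hC,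
   fun x _ => bSides_singleton hS hA x,
   bSides_compat hS hA hY hZ,
   fun _ _ h2 h3 h4 => bSides_maximal hS hA hY hZ h2 h3 h4⟩

lemma compl_inter (D A : Finset (Fin n)) : (Finset.univ \ D) ∩ A = A \ D := by
  ext z
  simp only [Finset.mem_inter, Finset.mem_sdiff, Finset.mem_univ, true_and]
  tauto

lemma bSides_restrict (hS : IsSys Finset.univ S) (hA : A ∈ S)
    (hY : 2 ≤ A.card → Y ∈ rSys S A) :
    (bSides S A Y Z).image (· ∩ A) = S.image (· ∩ A) := by
  have hB : Finset.univ \ A ∈ S := hS.sdiff_mem hA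
  have hBA : (Finset.univ \ A) ∩ A = ∅ := by
    rw [← Finset.disjoint_iff_inter_eq_empty]
    exact Finset.sdiff_disjoint
  apply Finset.Subset.antisymm
  · intro W hW
    obtain ⟨C, hC, rfl⟩ := Finset.mem_image.1 hW
    have hCA : C ∩ A = A \ (Finset.univ \ C) := by
      rw [← compl_inter, univ_sdiff_sdiff]
    rcases mem_bSides.1 hC with h | h
    · rcases mem_bC_iff.1 h with hCeq | hCeq | h' | h'
      · refine Finset.mem_image.2 ⟨C, ?_, rfl⟩
        rw [hCeq]; exact hA
      · refine Finset.mem_image.2 ⟨C, ?_, rfl⟩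
        rw [hCeq]; exact hB
      · obtain ⟨V, hV, hVC⟩ := (mem_rSys.1 (mem_half.1 h').1).2.2
        refine Finset.mem_image.2 ⟨V, hV, ?_⟩
        rw [hVC, Finset.inter_eq_left.2 (rSys_subset (mem_half.1 h').1)]
      · refine Finset.mem_image.2 ⟨Finset.univ \ A, hB, ?_⟩
        rw [hBA]
        have hdisj : Disjoint C A :=
          Finset.sdiff_disjoint.mono_left (rSys_subset (mem_half.1 h').1)
        exact (Finset.disjoint_iff_inter_eq_empty.1 hdisj).symm
    · rcases mem_bC_iff.1 h with h' | h' | h' | h'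
      · refine Finset.mem_image.2 ⟨Finset.univ \ A, hB, ?_⟩
        rw [hBA, hCA, h', Finset.sdiff_self]
      · have hCeq : C = A := by
          rw [← univ_sdiff_sdiff C, h', univ_sdiff_sdiff]
        rw [hCeq]
        exact Finset.mem_image.2 ⟨A, hA, rfl⟩
      · have hDr : Finset.univ \ C ∈ rSys S A := (mem_half.1 h').1
        obtain ⟨V, hV, hVD⟩ := (mem_rSys.1 (sdiff_mem_rSys hS hA hDr)).2.2
        exact Finset.mem_image.2 ⟨V, hV, by rw [hVD, hCA]⟩
      · refine Finset.mem_image.2 ⟨A, hA, ?_⟩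
        have hsub : Finset.univ \ C ⊆ Finset.univ \ A := rSys_subset (mem_half.1 h').1
        have hAC : A ⊆ C := by
          intro z hz
          by_contra hzC
          exact (Finset.mem_sdiff.1 (hsub (Finset.mem_sdiff.2 ⟨Finset.mem_univ z, hzC⟩))).2 hz
        rw [Finset.inter_self]
        exact (Finset.inter_eq_right.2 hAC).symm
  · intro W hW
    obtain ⟨V, hV, rfl⟩ := Finset.mem_image.1 hW
    by_cases hemp : V ∩ A = ∅
    · refine Finset.mem_image.2 ⟨Finset.univ \ A, B_mem_bSides, ?_⟩
      rw [hBA, hemp]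
    · by_cases hfull : V ∩ A = A
      · exact Finset.mem_image.2 ⟨A, A_mem_bSides, by rw [Finset.inter_self, hfull]⟩
      · have hr : V ∩ A ∈ rSys S A := mem_rSys.2 ⟨hfull, hemp, V, hV, rfl⟩
        rcases half_cover hS hA hY _ hr with h | h
        · exact Finset.mem_image.2 ⟨V ∩ A, halfA_subset_bSides h,
            Finset.inter_eq_left.2 (rSys_subset hr)⟩
        · refine Finset.mem_image.2 ⟨Finset.univ \ (A \ (V ∩ A)),
            bSides_compl (halfA_subset_bSides h), ?_⟩
          rw [compl_inter, sdiff_sdiff_eq (rSys_subset hr)]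

/-- classification of small sides relative to a doubled pair -/
lemma clsf {S' : Finset (Finset (Fin n))} (hS' : IsSys Finset.univ S')
    {A Y C : Finset (Fin n)} (hYS : Y ∈ S') (hAYS : A \ Y ∈ S') (hYA : Y ⊆ A)
    (hYne : Y ≠ ∅) (hYneA : Y ≠ A) (hAuniv : A ≠ Finset.univ)
    (hC : C ∈ S') (hCA : C ⊆ A) (hCneA : C ≠ A) : C ⊆ Y ∨ C ⊆ A \ Y := by
  have hnotuniv : ∀ P : Finset (Fin n), P ⊆ A → C ∪ P ≠ Finset.univ := by
    intro P hP hc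
    apply hAuniv
    apply Finset.Subset.antisymm (Finset.subset_univ A)
    rw [← hc]
    exact Finset.union_subset hCA hP
  rcases hS'.compat hC hYS with h | h | h | h
  · exact Or.inl h
  · rcases hS'.compat hC hAYS with h' | h' | h' | h'
    · exfalso
      apply hYne
      rw [Finset.eq_empty_iff_forall_notMem]
      intro z hz
      exact (Finset.mem_sdiff.1 (h' (h hz))).2 hz
    · exfalso
      apply hCneA
      apply Finset.Subset.antisymm hCA
      intro z hzA
      by_cases hzY : z ∈ Y
      · exact h hzY
      · exact h' (Finset.mem_sdiff.2 ⟨hzA, hzY⟩)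
    · refine Or.inl ?_
      intro z hz
      by_contra hzY
      exact Finset.disjoint_left.1 h' hz (Finset.mem_sdiff.2 ⟨hCA hz, hzY⟩)
    · exact absurd h' (hnotuniv (A \ Y) Finset.sdiff_subset)
  · exact Or.inr (Finset.subset_sdiff.2 ⟨hCA, h⟩)
  · exact absurd h (hnotuniv Y hYA)

/-- `half S A Y ⊆ S'` when `Y` is a doubled pair of `S'` and restrictions agree. -/
lemma half_subset_sides {S S' : Finset (Finset (Fin n))}
    (hS' : IsSys Finset.univ S') {A Y : Finset (Fin n)} (hA' : A ∈ S')
    (hrA : rSys S' A = rSys S A)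
    (hypY : 2 ≤ A.card → Y ∈ S' ∧ A \ Y ∈ S' ∧ Y ⊆ A ∧ Y ≠ ∅ ∧ Y ≠ A) :
    half S A Y ⊆ S' := by
  intro W hW
  obtain ⟨hWr, hWp⟩ := mem_half.1 hW
  rw [← hrA] at hWr
  have h2 : 2 ≤ A.card := rSys_card_two (hrA ▸ hWr)
  obtain ⟨hYS, hAYS, hYA, hYne, hYneA⟩ := hypY h2
  have hWA : W ⊆ A := rSys_subset hWr
  have hWne : W ≠ ∅ := (mem_rSys.1 hWr).2.1
  rcases mem_or_sdiff_mem hS' hA' hWr with h | h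
  · exact h
  · have hAWA : A \ W ⊆ A := Finset.sdiff_subset
    have hAWneA : A \ W ≠ A := sdiff_ne_self_of_ne_empty hWA hWne
    have hcls := clsf hS' hYS hAYS hYA hYne hYneA (hS'.ne_ground hA') h hAWA hAWneA
    rcases hWp with hWp | hWp <;> rcases hcls with hcl | hcl
    · exfalso
      apply hYneA
      apply Finset.Subset.antisymm hYA
      intro z hzA
      by_cases hzW : z ∈ W
      · exact hWp hzW
      · exact hcl (Finset.mem_sdiff.2 ⟨hzA, hzW⟩)
    · have : W = Y := by
        apply Finset.Subset.antisymm hWp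
        intro z hz
        by_contra hzW
        exact (Finset.mem_sdiff.1 (hcl (Finset.mem_sdiff.2 ⟨hYA hz, hzW⟩))).2 hz
      rw [this]
      exact hYS
    · have : W = A \ Y := by
        apply Finset.Subset.antisymm hWp
        intro z hz
        by_contra hzW
        exact (Finset.mem_sdiff.1 hz).2 (hcl (Finset.mem_sdiff.2 ⟨(Finset.mem_sdiff.1 hz).1, hzW⟩))
      rw [this]
      exact hAYS
    · exfalso
      apply hYne
      rw [Finset.eq_empty_iff_forall_notMem]
      intro z hz
      have hzA : z ∈ A := hYA hz
      by_cases hzW : z ∈ W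
      · exact (Finset.mem_sdiff.1 (hWp hzW)).2 hz
      · exact (Finset.mem_sdiff.1 (hcl (Finset.mem_sdiff.2 ⟨hzA, hzW⟩))).2 hz

/-- every small side of `S'` is in the construction -/
lemma side_mem_bSides {S S' : Finset (Finset (Fin n))}
    (hS' : IsSys Finset.univ S') {A Y Z C : Finset (Fin n)} (hA' : A ∈ S')
    (hrA : rSys S' A = rSys S A)
    (hypY : 2 ≤ A.card → Y ∈ S' ∧ A \ Y ∈ S' ∧ Y ⊆ A ∧ Y ≠ ∅ ∧ Y ≠ A)
    (hC : C ∈ S') (hCA : C ⊆ A) : C ∈ bSides S A Y Z := by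
  by_cases hCeqA : C = A
  · rw [hCeqA]; exact A_mem_bSides
  · have hCr : C ∈ rSys S' A := mem_rSys_of_mem hC hCA (hS'.ne_empty hC) hCeqA
    have h2 : 2 ≤ A.card := rSys_card_two hCr
    obtain ⟨hYS, hAYS, hYA, hYne, hYneA⟩ := hypY h2
    have hcls := clsf hS' hYS hAYS hYA hYne hYneA (hS'.ne_ground hA') hC hCA hCeqA
    refine halfA_subset_bSides (mem_half.2 ⟨?_, hcls⟩)
    rw [← hrA]
    exact hCr

lemma sides_eq_bSides {S S' : Finset (Finset (Fin n))}
    (hS' : IsSys Finset.univ S') {A Y Z : Finset (Fin n)} (hA' : A ∈ S')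
    (hrA : rSys S' A = rSys S A) (hrB : rSys S' (Finset.univ \ A) = rSys S (Finset.univ \ A))
    (hypY : 2 ≤ A.card → Y ∈ S' ∧ A \ Y ∈ S' ∧ Y ⊆ A ∧ Y ≠ ∅ ∧ Y ≠ A)
    (hypZ : 2 ≤ (Finset.univ \ A).card →
      Z ∈ S' ∧ (Finset.univ \ A) \ Z ∈ S' ∧ Z ⊆ Finset.univ \ A ∧ Z ≠ ∅ ∧ Z ≠ Finset.univ \ A) :
    S' = bSides S A Y Z := by
  have hB' : Finset.univ \ A ∈ S' := hS'.sdiff_mem hA'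
  have hmemB : ∀ C ∈ S', C ⊆ Finset.univ \ A → C ∈ bSides S A Y Z := by
    intro C hC hCB
    rw [← bSides_comm S A Y Z]
    exact side_mem_bSides hS' hB' hrB hypZ hC hCB
  have hcompl_mem : ∀ {E : Finset (Fin n)},
      Finset.univ \ E ∈ bSides S A Y Z → E ∈ bSides S A Y Z := by
    intro E h
    have := bSides_compl h
    rwa [univ_sdiff_sdiff] at this
  apply Finset.Subset.antisymm
  · intro C hC
    rcases hS'.compat hC hA' with h | h | h | h
    · exact side_mem_bSides hS' hA' hrA hypY hC h
    · refine hcompl_mem (hmemB _ (hS'.sdiff_mem hC) ?_)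
      exact Finset.sdiff_subset_sdiff Finset.Subset.rfl h
    · exact hmemB C hC (Finset.subset_sdiff.2 ⟨Finset.subset_univ C, h⟩)
    · refine hcompl_mem (side_mem_bSides hS' hA' hrA hypY (hS'.sdiff_mem hC) ?_)
      exact sdiff_subset_of_union (by rwa [Finset.union_comm])
  · have hbC : bC S A Y Z ⊆ S' := by
      intro C hC
      rcases mem_bC_iff.1 hC with rfl | rfl | h | h
      · exact hA'
      · exact hB'
      · exact half_subset_sides hS' hA' hrA hypY h
      · exact half_subset_sides hS' hB' hrB hypZ h
    intro C hC
    rcases mem_bSides.1 hC with h | h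
    · exact hbC h
    · have := hS'.sdiff_mem (hbC h)
      rwa [univ_sdiff_sdiff] at this

end BuildAxioms

/-! ### Bridge to `PhyloTree` -/

section Bridge

lemma sides_isSys (T : PhyloTree n) : IsSys Finset.univ T.sides := by
  refine ⟨?_, ?_, ?_, ?_, ?_⟩
  · intro A hA
    exact ⟨Finset.subset_univ A,
      Finset.nonempty_iff_ne_empty.1 (T.proper A hA).1, (T.proper A hA).2⟩
  · intro A hA
    have := T.compl_mem A hA
    rwa [Finset.compl_eq_univ_sdiff] at this
  · intro x _
    exact T.singleton_mem x
  · exact T.compatible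
  · intro A _ h2 h3 h4
    exact T.maximal A (Finset.nonempty_iff_ne_empty.2 h2) h3 h4

lemma tree_ext {T T' : PhyloTree n} (h : T.sides = T'.sides) : T = T' := by
  cases T; cases T'; simp_all

noncomputable instance : DecidableEq (PhyloTree n) := Classical.decEq _

open Classical in
noncomputable def toTree (T₀ : PhyloTree n) (S : Finset (Finset (Fin n))) : PhyloTree n :=
  if h : IsSys Finset.univ S then
    { sides := S
      proper := fun A hA => ⟨Finset.nonempty_iff_ne_empty.2 (h.1 A hA).2.1, (h.1 A hA).2.2⟩
      compl_mem := fun A hA => by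
        rw [Finset.compl_eq_univ_sdiff]
        exact h.2.1 A hA
      singleton_mem := fun x => h.2.2.1 x (Finset.mem_univ x)
      compatible := h.2.2.2.1
      maximal := fun A h1 h2 h3 => h.2.2.2.2 A (Finset.subset_univ A)
        (Finset.nonempty_iff_ne_empty.1 h1) h2 h3 }
  else T₀

lemma toTree_sides {T₀ : PhyloTree n} {S : Finset (Finset (Fin n))}
    (h : IsSys Finset.univ S) : (toTree T₀ S).sides = S := by
  rw [toTree, dif_pos h]

lemma restrict_eq_image (T : PhyloTree n) (X : Finset (Fin n)) :
    T.restrict X = T.sides.image (· ∩ X) := rfl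

lemma rSys_eq_restrict (T : PhyloTree n) (X : Finset (Fin n)) :
    rSys T.sides X = ((T.restrict X).erase ∅).erase X := rfl

lemma sdiff_ne_self {A W : Finset (Fin n)} (hWA : W ⊆ A) (hWne : W ≠ ∅) : A \ W ≠ W := by
  intro h
  obtain ⟨w, hw⟩ := Finset.nonempty_iff_ne_empty.2 hWne
  have : w ∈ A \ W := by rw [h]; exact hw
  exact (Finset.mem_sdiff.1 this).2 hw

noncomputable def choices (S : Finset (Finset (Fin n))) (A : Finset (Fin n)) :
    Finset (Finset (Fin n)) :=
  if 2 ≤ A.card then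
    (rSys S A).filter (fun W => Encodable.encode W < Encodable.encode (A \ W))
  else {∅}

def mval (a : ℕ) : ℕ := if 2 ≤ a then 2 * a - 3 else 1

lemma choices_ok {S : Finset (Finset (Fin n))} {A Y : Finset (Fin n)}
    (hY : Y ∈ choices S A) : 2 ≤ A.card → Y ∈ rSys S A := by
  intro h2
  rw [choices, if_pos h2] at hY
  exact (Finset.mem_filter.1 hY).1

lemma choices_enc {S : Finset (Finset (Fin n))} {A Y : Finset (Fin n)}
    (hY : Y ∈ choices S A) (h2 : 2 ≤ A.card) :
    Encodable.encode Y < Encodable.encode (A \ Y) := by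
  rw [choices, if_pos h2] at hY
  exact (Finset.mem_filter.1 hY).2

lemma choices_card_one {S : Finset (Finset (Fin n))} {A Y : Finset (Fin n)}
    (hY : Y ∈ choices S A) (h2 : ¬ 2 ≤ A.card) : Y = ∅ := by
  rw [choices, if_neg h2] at hY
  exact Finset.mem_singleton.1 hY

lemma card_choices {S : Finset (Finset (Fin n))} {A : Finset (Fin n)}
    (hS : IsSys Finset.univ S) (hA : A ∈ S) :
    (choices S A).card = mval A.card := by
  by_cases h2 : 2 ≤ A.card
  · rw [choices, if_pos h2, mval, if_pos h2]
    have hsys := isSys_rSys hS hA h2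
    have hcard : (rSys S A).card + 6 = 4 * A.card := sys_card_aux A.card A _ rfl hsys h2
    have hpair := pair_card (rSys S A) (fun W => A \ W) Encodable.encode
      (fun W hW => sdiff_mem_rSys hS hA hW)
      (fun W hW => sdiff_sdiff_eq (rSys_subset hW))
      (fun W hW hc => sdiff_ne_self (rSys_subset hW) ((mem_rSys.1 hW).2.1)
        (Encodable.encode_injective hc))
    omega
  · rw [choices, if_neg h2, mval, if_neg h2, Finset.card_singleton]

noncomputable def RF (T : PhyloTree n) (A : Finset (Fin n)) : Finset (PhyloTree n) :=
  (choices T.sides A ×ˢ choices T.sides (Finset.univ \ A)).image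
    (fun p => toTree T (bSides T.sides A p.1 p.2))

end Bridge

section Main

variable {T : PhyloTree n} {A : Finset (Fin n)}

lemma mem_RF (hn : 4 ≤ n) (hA : A ∈ T.sides) {T' : PhyloTree n} :
    T' ∈ RF T A ↔ (A ∈ T'.sides ∧ T.restrict A = T'.restrict A ∧
      T.restrict Aᶜ = T'.restrict Aᶜ) := by
  have hS := sides_isSys T
  have hcompl : (Aᶜ : Finset (Fin n)) = Finset.univ \ A := Finset.compl_eq_univ_sdiff A
  have hB : Finset.univ \ A ∈ T.sides := hS.sdiff_mem hA
  constructor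
  · intro hmem
    obtain ⟨p, hp, rfl⟩ := Finset.mem_image.1 hmem
    obtain ⟨hp1, hp2⟩ := Finset.mem_product.1 hp
    have hY := fun h2 => choices_ok hp1 h2
    have hZ := fun h2 => choices_ok hp2 h2
    have hsys := isSys_bSides hS hA hY hZ
    have hsides := toTree_sides (T₀ := T) hsys
    refine ⟨?_, ?_, ?_⟩
    · rw [hsides]
      exact A_mem_bSides
    · rw [restrict_eq_image, restrict_eq_image, hsides]
      exact (bSides_restrict hS hA hY).symm
    · rw [restrict_eq_image, restrict_eq_image, hsides, hcompl,
        ← bSides_comm T.sides A p.1 p.2]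
      exact (bSides_restrict hS hB hZ).symm
  · rintro ⟨hA', hresA, hresB⟩
    have hS' := sides_isSys T'
    have hrA : rSys T'.sides A = rSys T.sides A := by
      rw [rSys_eq_restrict, rSys_eq_restrict, hresA]
    have hrB : rSys T'.sides (Finset.univ \ A) = rSys T.sides (Finset.univ \ A) := by
      rw [rSys_eq_restrict, rSys_eq_restrict, ← hcompl, hresB]
    have hmk : ∀ (A₀ : Finset (Fin n)), A₀ ∈ T'.sides → A₀ ∈ T.sides →
        rSys T'.sides A₀ = rSys T.sides A₀ →
        ∃ Y₀, Y₀ ∈ choices T.sides A₀ ∧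
          (2 ≤ A₀.card → Y₀ ∈ T'.sides ∧ A₀ \ Y₀ ∈ T'.sides ∧ Y₀ ⊆ A₀ ∧ Y₀ ≠ ∅ ∧ Y₀ ≠ A₀) := by
      intro A₀ hA₀' hA₀ hr
      by_cases h2 : 2 ≤ A₀.card
      · obtain ⟨Y', hY'S, hAY'S, hY'A, hY'ne, hY'neA⟩ := exists_double hS' hn hA₀' h2
        have hY'r : Y' ∈ rSys T.sides A₀ := by
          rw [← hr]
          exact mem_rSys_of_mem hY'S hY'A hY'ne hY'neA
        have hAY'r : A₀ \ Y' ∈ rSys T.sides A₀ := sdiff_mem_rSys (sides_isSys T) hA₀ hY'r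
        have hneq : Encodable.encode Y' ≠ Encodable.encode (A₀ \ Y') := by
          intro hc
          exact sdiff_ne_self hY'A hY'ne (Encodable.encode_injective hc).symm
        by_cases hlt : Encodable.encode Y' < Encodable.encode (A₀ \ Y')
        · refine ⟨Y', ?_, fun _ => ⟨hY'S, hAY'S, hY'A, hY'ne, hY'neA⟩⟩
          rw [choices, if_pos h2]
          exact Finset.mem_filter.2 ⟨hY'r, hlt⟩
        · refine ⟨A₀ \ Y', ?_, fun _ => ⟨hAY'S, ?_, Finset.sdiff_subset, ?_, ?_⟩⟩
          · rw [choices, if_pos h2]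
            refine Finset.mem_filter.2 ⟨hAY'r, ?_⟩
            rw [sdiff_sdiff_eq hY'A]
            omega
          · rw [sdiff_sdiff_eq hY'A]
            exact hY'S
          · exact (mem_rSys.1 hAY'r).2.1
          · exact (mem_rSys.1 hAY'r).1
      · refine ⟨∅, ?_, fun hc => absurd hc h2⟩
        rw [choices, if_neg h2]
        exact Finset.mem_singleton_self ∅
    obtain ⟨Y₀, hY₀c, hY₀p⟩ := hmk A hA' hA hrA
    obtain ⟨Z₀, hZ₀c, hZ₀p⟩ := hmk _ (hS'.sdiff_mem hA') hB hrB
    have hseq : T'.sides = bSides T.sides A Y₀ Z₀ :=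
      sides_eq_bSides hS' hA' hrA hrB hY₀p hZ₀p
    refine Finset.mem_image.2 ⟨(Y₀, Z₀), Finset.mem_product.2 ⟨hY₀c, hZ₀c⟩, ?_⟩
    apply tree_ext
    rw [toTree_sides (isSys_bSides hS hA (fun h2 => choices_ok hY₀c h2)
      (fun h2 => choices_ok hZ₀c h2))]
    exact hseq.symm

lemma T_mem_RF (hn : 4 ≤ n) (hA : A ∈ T.sides) : T ∈ RF T A :=
  (mem_RF hn hA).2 ⟨hA, rfl, rfl⟩

lemma card_RF (hn : 4 ≤ n) (hA : A ∈ T.sides) :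
    (RF T A).card = mval A.card * mval (Finset.univ \ A).card := by
  have hS := sides_isSys T
  have hB := hS.sdiff_mem hA
  have hinj : Set.InjOn (fun p : Finset (Fin n) × Finset (Fin n) =>
      toTree T (bSides T.sides A p.1 p.2))
      ↑(choices T.sides A ×ˢ choices T.sides (Finset.univ \ A)) := by
    intro p hp q hq heq
    obtain ⟨hp1, hp2⟩ := Finset.mem_product.1 (Finset.mem_coe.1 hp)
    obtain ⟨hq1, hq2⟩ := Finset.mem_product.1 (Finset.mem_coe.1 hq)
    have hsysp := isSys_bSides hS hA (fun h2 => choices_ok hp1 h2)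
      (fun h2 => choices_ok hp2 h2)
    have hsysq := isSys_bSides hS hA (fun h2 => choices_ok hq1 h2)
      (fun h2 => choices_ok hq2 h2)
    have hseq : bSides T.sides A p.1 p.2 = bSides T.sides A q.1 q.2 := by
      have hseq' : (toTree T (bSides T.sides A p.1 p.2)).sides
          = (toTree T (bSides T.sides A q.1 q.2)).sides := congrArg PhyloTree.sides heq
      rwa [toTree_sides hsysp, toTree_sides hsysq] at hseq'
    have main : ∀ (A₀ W V : Finset (Fin n)), A₀ ∈ bSides T.sides A p.1 p.2 →
        W ∈ rSys T.sides A₀ → V ∈ rSys T.sides A₀ →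
        W ∈ half T.sides A₀ W → A₀ \ W ∈ half T.sides A₀ W →
        half T.sides A₀ W ⊆ bSides T.sides A p.1 p.2 →
        half T.sides A₀ V ⊆ bSides T.sides A q.1 q.2 →
        Encodable.encode W < Encodable.encode (A₀ \ W) →
        Encodable.encode V < Encodable.encode (A₀ \ V) →
        V ∈ half T.sides A₀ V → A₀ \ V ∈ half T.sides A₀ V →
        W = V := by
      intro A₀ W V hA₀ hWr hVr hWh hAWh hsubW hsubV heW heV hVh hAVh
      have hund := double_unique hsysp hA₀
        (hsubW hWh) (hsubW hAWh) (rSys_subset hWr) ((mem_rSys.1 hWr).2.1)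
        ((mem_rSys.1 hWr).1)
        (by rw [hseq]; exact hsubV hVh) (by rw [hseq]; exact hsubV hAVh)
        (rSys_subset hVr) ((mem_rSys.1 hVr).2.1) ((mem_rSys.1 hVr).1)
      rcases hund with h | h
      · exact h.symm
      · exfalso
        rw [h, sdiff_sdiff_eq (rSys_subset hWr)] at heV
        omega
    have hmemY : ∀ (A₀ Y : Finset (Fin n)), A₀ ∈ T.sides → Y ∈ rSys T.sides A₀ →
        Y ∈ half T.sides A₀ Y ∧ A₀ \ Y ∈ half T.sides A₀ Y := by
      intro A₀ Y hA₀ hY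
      exact ⟨mem_half.2 ⟨hY, Or.inl Finset.Subset.rfl⟩,
        mem_half.2 ⟨sdiff_mem_rSys hS hA₀ hY, Or.inr Finset.Subset.rfl⟩⟩
    have h1 : p.1 = q.1 := by
      by_cases h2 : 2 ≤ A.card
      · have hpr := choices_ok hp1 h2
        have hqr := choices_ok hq1 h2
        exact main A p.1 q.1 A_mem_bSides hpr hqr (hmemY A p.1 hA hpr).1
          (hmemY A p.1 hA hpr).2 halfA_subset_bSides halfA_subset_bSides
          (choices_enc hp1 h2) (choices_enc hq1 h2)
          (hmemY A q.1 hA hqr).1 (hmemY A q.1 hA hqr).2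
      · rw [choices_card_one hp1 h2, choices_card_one hq1 h2]
    have h2 : p.2 = q.2 := by
      by_cases h2 : 2 ≤ (Finset.univ \ A).card
      · have hpr := choices_ok hp2 h2
        have hqr := choices_ok hq2 h2
        exact main (Finset.univ \ A) p.2 q.2 B_mem_bSides hpr hqr
          (hmemY _ p.2 hB hpr).1 (hmemY _ p.2 hB hpr).2
          halfB_subset_bSides halfB_subset_bSides
          (choices_enc hp2 h2) (choices_enc hq2 h2)
          (hmemY _ q.2 hB hqr).1 (hmemY _ q.2 hB hqr).2
      · rw [choices_card_one hp2 h2, choices_card_one hq2 h2]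
    exact Prod.ext h1 h2
  rw [RF, Finset.card_image_of_injOn hinj, Finset.card_product,
    card_choices hS hA, card_choices hS hB]

end Main

section Count

variable {T : PhyloTree n}

lemma ne_compl_self {A : Finset (Fin n)} (hA : A ∈ T.sides) : A ≠ Aᶜ := by
  intro h
  obtain ⟨a, ha⟩ := (T.proper A hA).1
  have : a ∈ Aᶜ := h ▸ ha
  exact (Finset.mem_compl.1 this) ha

noncomputable def reps (T : PhyloTree n) : Finset (Finset (Fin n)) :=
  T.sides.filter (fun A => Encodable.encode A < Encodable.encode Aᶜ)

noncomputable def MF (T : PhyloTree n) (A : Finset (Fin n)) : Finset (PhyloTree.Move n) :=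
  ((RF T A).erase T).image (fun T' => (Sym2.mk A Aᶜ, T'))

noncomputable def OTBRF (T : PhyloTree n) : Finset (PhyloTree.Move n) :=
  (reps T).biUnion (fun A => MF T A)

lemma coe_OTBRF (hn : 4 ≤ n) : ↑(OTBRF T) = T.OTBR := by
  ext θ
  rw [Finset.mem_coe]
  constructor
  · intro hθ
    obtain ⟨A, hArep, hθA⟩ := Finset.mem_biUnion.1 hθ
    obtain ⟨hAT, -⟩ := Finset.mem_filter.1 hArep
    obtain ⟨T', hT', rfl⟩ := Finset.mem_image.1 hθA
    obtain ⟨hTne, hT'RF⟩ := Finset.mem_erase.1 hT'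
    obtain ⟨hA', hres1, hres2⟩ := (mem_RF hn hAT).1 hT'RF
    exact ⟨hTne, A, rfl, hAT, hA', hres1, hres2⟩
  · rintro ⟨hTne, A, hmk, hAT, hA', hres1, hres2⟩
    have hAne : A ≠ Aᶜ := ne_compl_self hAT
    have hence : Encodable.encode A ≠ Encodable.encode (Aᶜ : Finset (Fin n)) :=
      fun hc => hAne (Encodable.encode_injective hc)
    rcases lt_or_gt_of_ne hence with hlt | hgt
    · refine Finset.mem_biUnion.2 ⟨A, Finset.mem_filter.2 ⟨hAT, hlt⟩, ?_⟩
      refine Finset.mem_image.2 ⟨θ.2, Finset.mem_erase.2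
        ⟨hTne, (mem_RF hn hAT).2 ⟨hA', hres1, hres2⟩⟩, ?_⟩
      exact Prod.ext hmk.symm rfl
    · refine Finset.mem_biUnion.2 ⟨Aᶜ, Finset.mem_filter.2
        ⟨T.compl_mem A hAT, by rw [compl_compl]; exact hgt⟩, ?_⟩
      refine Finset.mem_image.2 ⟨θ.2, Finset.mem_erase.2
        ⟨hTne, (mem_RF hn (T.compl_mem A hAT)).2
          ⟨θ.2.compl_mem A hA', hres2, by rw [compl_compl]; exact hres1⟩⟩, ?_⟩
      refine Prod.ext ?_ rfl
      rw [hmk, compl_compl]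
      exact (Sym2.eq_swap (a := A) (b := Aᶜ)).symm

lemma card_MF (hn : 4 ≤ n) {A : Finset (Fin n)} (hA : A ∈ T.sides) :
    (MF T A).card + 1 = (RF T A).card := by
  have hinj : Function.Injective (fun T' : PhyloTree n => (Sym2.mk A Aᶜ, T')) :=
    fun a b h => congrArg Prod.snd h
  rw [MF, Finset.card_image_of_injective _ hinj]
  exact Finset.card_erase_add_one (T_mem_RF hn hA)

lemma card_OTBRF (hn : 4 ≤ n) : (OTBRF T).card = ∑ A ∈ reps T, (MF T A).card := by
  rw [OTBRF]
  apply Finset.card_biUnion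
  intro A hA A' hA' hne
  rw [Function.onFun, Finset.disjoint_left]
  intro θ h1 h2
  obtain ⟨T₁, -, hθ1⟩ := Finset.mem_image.1 h1
  obtain ⟨T₂, -, hθ2⟩ := Finset.mem_image.1 h2
  have hfst : Sym2.mk A Aᶜ = Sym2.mk A' A'ᶜ := by
    have e1 : θ.1 = Sym2.mk A Aᶜ := by rw [← hθ1]
    have e2 : θ.1 = Sym2.mk A' A'ᶜ := by rw [← hθ2]
    rw [← e1, e2]
  rw [Sym2.eq_iff] at hfst
  rcases hfst with ⟨h, -⟩ | ⟨hx, hy⟩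
  · exact hne h
  · have e1 := (Finset.mem_filter.1 hA).2
    have e2 := (Finset.mem_filter.1 hA').2
    rw [← hx] at e2
    rw [hy] at e1
    omega

lemma card_sides_tree (hn : 4 ≤ n) : T.sides.card + 6 = 4 * n := by
  have h := sys_card_aux (n := n) ((Finset.univ : Finset (Fin n)).card)
    Finset.univ T.sides rfl (sides_isSys T)
  rw [Finset.card_univ, Fintype.card_fin] at h
  exact h (by omega)

end Count

section Final

variable {T : PhyloTree n}

lemma side_card_pos {A : Finset (Fin n)} (hA : A ∈ T.sides) :
    1 ≤ A.card ∧ 1 ≤ Aᶜ.card ∧ A.card + Aᶜ.card = n := by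
  refine ⟨Finset.card_pos.2 (T.proper A hA).1,
    Finset.card_pos.2 (T.proper _ (T.compl_mem A hA)).1, ?_⟩
  rw [Finset.card_add_card_compl, Fintype.card_fin]

lemma card_filter_single : (T.sides.filter (fun A => A.card = 1)).card = n := by
  have heq : T.sides.filter (fun A => A.card = 1)
      = Finset.univ.image (fun x : Fin n => ({x} : Finset (Fin n))) := by
    ext A
    simp only [Finset.mem_filter, Finset.mem_image, Finset.mem_univ, true_and]
    constructor
    · rintro ⟨hmem, h1⟩
      obtain ⟨a, rfl⟩ := Finset.card_eq_one.1 h1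
      exact ⟨a, rfl⟩
    · rintro ⟨x, rfl⟩
      exact ⟨T.singleton_mem x, Finset.card_singleton x⟩
  rw [heq, Finset.card_image_of_injective _ Finset.singleton_injective,
    Finset.card_univ, Fintype.card_fin]

lemma card_filter_cosingle : (T.sides.filter (fun A => Aᶜ.card = 1)).card = n := by
  have heq : (T.sides.filter (fun A => Aᶜ.card = 1)).card
      = (T.sides.filter (fun A => A.card = 1)).card := by
    apply Finset.card_nbij' (fun A => Aᶜ) (fun A => Aᶜ)
    · intro A hA
      obtain ⟨h1, h2⟩ := Finset.mem_filter.1 hA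
      exact Finset.mem_filter.2 ⟨T.compl_mem A h1, h2⟩
    · intro A hA
      obtain ⟨h1, h2⟩ := Finset.mem_filter.1 hA
      exact Finset.mem_filter.2 ⟨T.compl_mem A h1, by rw [compl_compl]; exact h2⟩
    · intro A _
      exact compl_compl A
    · intro A _
      exact compl_compl A
  rw [heq, card_filter_single]

lemma card_filter_NT (hn : 4 ≤ n) :
    (T.sides.filter (fun A => 2 ≤ A.card ∧ 2 ≤ Aᶜ.card)).card = 2 * n - 6 := by
  have htot := card_sides_tree (T := T) hn
  have hsplit := Finset.card_filter_add_card_filter_not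
    (s := T.sides) (p := fun A => 2 ≤ A.card ∧ 2 ≤ Aᶜ.card)
  have hnotNT : T.sides.filter (fun A => ¬(2 ≤ A.card ∧ 2 ≤ Aᶜ.card))
      = T.sides.filter (fun A => A.card = 1) ∪ T.sides.filter (fun A => Aᶜ.card = 1) := by
    ext A
    simp only [Finset.mem_filter, Finset.mem_union]
    constructor
    · rintro ⟨hmem, hcond⟩
      obtain ⟨c1, c2, c3⟩ := side_card_pos hmem
      by_cases h1 : A.card = 1
      · exact Or.inl ⟨hmem, h1⟩
      · exact Or.inr ⟨hmem, by omega⟩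
    · rintro (⟨hmem, h1⟩ | ⟨hmem, h1⟩)
      · exact ⟨hmem, by omega⟩
      · exact ⟨hmem, by omega⟩
  have hdisj : Disjoint (T.sides.filter (fun A => A.card = 1))
      (T.sides.filter (fun A => Aᶜ.card = 1)) := by
    rw [Finset.disjoint_left]
    intro A h1 h2
    obtain ⟨hm, e1⟩ := Finset.mem_filter.1 h1
    obtain ⟨-, e2⟩ := Finset.mem_filter.1 h2
    obtain ⟨-, -, e3⟩ := side_card_pos hm
    omega
  rw [hnotNT, Finset.card_union_of_disjoint hdisj, card_filter_single,
    card_filter_cosingle] at hsplit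
  omega

lemma card_reps (hn : 4 ≤ n) : (reps T).card = 2 * n - 3 := by
  have hpair := pair_card T.sides (fun A => Aᶜ) Encodable.encode
    (fun A hA => T.compl_mem A hA)
    (fun A _ => compl_compl A)
    (fun A hA hc => ne_compl_self hA (Encodable.encode_injective hc).symm)
  have htot := card_sides_tree (T := T) hn
  rw [reps]
  omega

lemma card_repsNT (hn : 4 ≤ n) :
    ((reps T).filter (fun A => 2 ≤ A.card ∧ 2 ≤ Aᶜ.card)).card = n - 3 := by
  have hpair := pair_card (T.sides.filter (fun A => 2 ≤ A.card ∧ 2 ≤ Aᶜ.card))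
    (fun A => Aᶜ) Encodable.encode
    (fun A hA => by
      obtain ⟨h1, h2, h3⟩ := Finset.mem_filter.1 hA
      exact Finset.mem_filter.2 ⟨T.compl_mem A h1, h3, by rw [compl_compl]; exact h2⟩)
    (fun A _ => compl_compl A)
    (fun A hA hc =>
      ne_compl_self (Finset.mem_filter.1 hA).1 (Encodable.encode_injective hc).symm)
  have hcomm : (T.sides.filter (fun A => 2 ≤ A.card ∧ 2 ≤ Aᶜ.card)).filter
      (fun A => Encodable.encode A < Encodable.encode Aᶜ)
      = (reps T).filter (fun A => 2 ≤ A.card ∧ 2 ≤ Aᶜ.card) := by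
    rw [reps, Finset.filter_comm]
  rw [hcomm] at hpair
  have := card_filter_NT (T := T) hn
  omega

lemma gamma_eq (hn : 4 ≤ n) :
    (T.gamma : ℤ) = ∑ A ∈ (reps T).filter (fun A => 2 ≤ A.card ∧ 2 ≤ Aᶜ.card),
      ((A.card : ℤ) * (Aᶜ.card : ℤ)) := by
  have hpair := pair_sum (T.sides.filter (fun A => 2 ≤ A.card ∧ 2 ≤ Aᶜ.card))
    (fun A => Aᶜ) Encodable.encode
    (fun A hA => by
      obtain ⟨h1, h2, h3⟩ := Finset.mem_filter.1 hA
      exact Finset.mem_filter.2 ⟨T.compl_mem A h1, h3, by rw [compl_compl]; exact h2⟩)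
    (fun A _ => compl_compl A)
    (fun A hA hc =>
      ne_compl_self (Finset.mem_filter.1 hA).1 (Encodable.encode_injective hc).symm)
    (fun A => A.card * Aᶜ.card)
    (fun A _ => by
      show Aᶜ.card * Aᶜᶜ.card = A.card * Aᶜ.card
      rw [compl_compl]
      ring)
  have hcomm : (T.sides.filter (fun A => 2 ≤ A.card ∧ 2 ≤ Aᶜ.card)).filter
      (fun A => Encodable.encode A < Encodable.encode Aᶜ)
      = (reps T).filter (fun A => 2 ≤ A.card ∧ 2 ≤ Aᶜ.card) := by
    rw [reps, Finset.filter_comm]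
  rw [hcomm] at hpair
  have hg : T.gamma = ∑ A ∈ (reps T).filter (fun A => 2 ≤ A.card ∧ 2 ≤ Aᶜ.card),
      A.card * Aᶜ.card := by
    rw [PhyloTree.gamma, hpair, smul_eq_mul, Nat.mul_div_cancel_left _ (by norm_num)]
  rw [hg, Nat.cast_sum]
  exact Finset.sum_congr rfl (fun A _ => Nat.cast_mul _ _)

lemma MF_card_NT (hn : 4 ≤ n) {A : Finset (Fin n)} (hA : A ∈ T.sides)
    (h2a : 2 ≤ A.card) (h2b : 2 ≤ Aᶜ.card) :
    ((MF T A).card : ℤ) = 4 * ((A.card : ℤ) * (Aᶜ.card : ℤ)) - (6 * (n : ℤ) - 8) := by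
  have h1 := card_MF hn hA
  have h2 := card_RF hn hA
  rw [← Finset.compl_eq_univ_sdiff] at h2
  rw [mval, if_pos h2a, mval, if_pos h2b] at h2
  have hab : (A.card : ℤ) + (Aᶜ.card : ℤ) = n := by
    exact_mod_cast congrArg (Nat.cast : ℕ → ℤ) (side_card_pos hA).2.2
  have hℕ : (MF T A).card + 1 = (2 * A.card - 3) * (2 * Aᶜ.card - 3) := by
    rw [h1, h2]
  have hZ : ((MF T A).card : ℤ) + 1
      = (2 * (A.card : ℤ) - 3) * (2 * (Aᶜ.card : ℤ) - 3) := by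
    zify [show 3 ≤ 2 * A.card by omega, show 3 ≤ 2 * Aᶜ.card by omega] at hℕ
    exact hℕ
  linear_combination hZ - 6 * hab

lemma MF_card_triv (hn : 4 ≤ n) {A : Finset (Fin n)} (hA : A ∈ T.sides)
    (hnot : ¬(2 ≤ A.card ∧ 2 ≤ Aᶜ.card)) : (MF T A).card + 6 = 2 * n := by
  have h1 := card_MF hn hA
  have h2 := card_RF hn hA
  rw [← Finset.compl_eq_univ_sdiff] at h2
  obtain ⟨c1, c2, c3⟩ := side_card_pos hA
  by_cases ha : A.card = 1
  · rw [mval, if_neg (by omega), mval, if_pos (by omega : 2 ≤ Aᶜ.card)] at h2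
    omega
  · have hb : Aᶜ.card = 1 := by omega
    rw [mval, if_pos (by omega : 2 ≤ A.card), mval, if_neg (by omega)] at h2
    omega

end Final

end PhyloAux
/-- Theorem 5: `|O_TBR(T)| = 4Γ(T) − 4(n−2)(n−3)` for
`T ∈ 𝒯_n`, `n ≥ 4`. -/
theorem otbr_card (n : ℕ) (hn : 4 ≤ n) (T : PhyloTree n) :
    ((T.OTBR.ncard : ℤ)) =
      4 * (T.gamma : ℤ) - 4 * ((n : ℤ) - 2) * ((n : ℤ) - 3) := by
  classical
  have hset : T.OTBR = ↑(PhyloAux.OTBRF T) := (PhyloAux.coe_OTBRF hn).symm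
  rw [hset, Set.ncard_coe_finset, PhyloAux.card_OTBRF hn, Nat.cast_sum,
    ← Finset.sum_filter_add_sum_filter_not (PhyloAux.reps T)
      (fun A => 2 ≤ A.card ∧ 2 ≤ Aᶜ.card)]
  have hNT : ∑ A ∈ (PhyloAux.reps T).filter (fun A => 2 ≤ A.card ∧ 2 ≤ Aᶜ.card),
      ((PhyloAux.MF T A).card : ℤ)
      = 4 * (T.gamma : ℤ) - ((n : ℤ) - 3) * (6 * (n : ℤ) - 8) := by
    have hpt : ∀ A ∈ (PhyloAux.reps T).filter (fun A => 2 ≤ A.card ∧ 2 ≤ Aᶜ.card),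
        ((PhyloAux.MF T A).card : ℤ)
        = 4 * ((A.card : ℤ) * (Aᶜ.card : ℤ)) - (6 * (n : ℤ) - 8) := by
      intro A hA
      obtain ⟨hrep, h2a, h2b⟩ := Finset.mem_filter.1 hA
      exact PhyloAux.MF_card_NT hn (Finset.mem_filter.1 hrep).1 h2a h2b
    rw [Finset.sum_congr rfl hpt, Finset.sum_sub_distrib, Finset.sum_const,
      PhyloAux.card_repsNT hn, ← Finset.mul_sum, ← PhyloAux.gamma_eq hn,
      nsmul_eq_mul, Nat.cast_sub (show 3 ≤ n by omega)]
    push_cast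
    ring
  have hTriv : ∑ A ∈ (PhyloAux.reps T).filter (fun A => ¬(2 ≤ A.card ∧ 2 ≤ Aᶜ.card)),
      ((PhyloAux.MF T A).card : ℤ) = (n : ℤ) * (2 * (n : ℤ) - 6) := by
    have hpt : ∀ A ∈ (PhyloAux.reps T).filter (fun A => ¬(2 ≤ A.card ∧ 2 ≤ Aᶜ.card)),
        ((PhyloAux.MF T A).card : ℤ) = 2 * (n : ℤ) - 6 := by
      intro A hA
      obtain ⟨hrep, hcond⟩ := Finset.mem_filter.1 hA
      have h0 := PhyloAux.MF_card_triv hn (Finset.mem_filter.1 hrep).1 hcond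
      have h1 : ((PhyloAux.MF T A).card : ℤ) + 6 = 2 * n := by exact_mod_cast h0
      linarith
    rw [Finset.sum_congr rfl hpt, Finset.sum_const, nsmul_eq_mul]
    have hcount : ((PhyloAux.reps T).filter
        (fun A => ¬(2 ≤ A.card ∧ 2 ≤ Aᶜ.card))).card = n := by
      have h1 := Finset.card_filter_add_card_filter_not
        (s := PhyloAux.reps T) (p := fun A => 2 ≤ A.card ∧ 2 ≤ Aᶜ.card)
      have h2 := PhyloAux.card_reps (T := T) hn
      have h3 := PhyloAux.card_repsNT (T := T) hn
      omega
    rw [hcount]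
  rw [hNT, hTriv]
  ring
end

section
/- Let n ≥ 4 and let T ∈ 𝒯_n be a phylogenetic tree such that Γ(T) ≥ Γ(T') for all T' ∈ 𝒯_n. Then T is a caterpillar. -/
section Aux

open Finset

variable {n : ℕ}

lemma sc_iff {A B : Finset (Fin n)} : SidesCompatible A B ↔
    (∀ x, x ∈ A → x ∈ B) ∨ (∀ x, x ∈ B → x ∈ A) ∨
    (∀ x, x ∈ A → x ∉ B) ∨ (∀ x, x ∈ A ∨ x ∈ B) := by
  unfold SidesCompatible
  simp [Finset.subset_iff, Finset.disjoint_left, Finset.eq_univ_iff_forall,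
    Finset.mem_union]

lemma sc_symm {A B : Finset (Fin n)} (h : SidesCompatible A B) :
    SidesCompatible B A := by
  rcases h with h | h | h | h
  · exact Or.inr (Or.inl h)
  · exact Or.inl h
  · exact Or.inr <| Or.inr <| Or.inl h.symm
  · exact Or.inr <| Or.inr <| Or.inr <| by rwa [Finset.union_comm]

lemma sc_compl {A B : Finset (Fin n)} (h : SidesCompatible A B) :
    SidesCompatible A Bᶜ := by
  rw [sc_iff] at h ⊢
  simp only [Finset.mem_compl]
  rcases h with h | h | h | h
  · exact Or.inr <| Or.inr <| Or.inl fun x hx hb => hb (h x hx)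
  · exact Or.inr <| Or.inr <| Or.inr fun x => or_iff_not_imp_right.mpr
      fun hb => h x (not_not.mp hb)
  · exact Or.inl fun x hx => h x hx
  · exact Or.inr <| Or.inl fun x hx => (h x).resolve_right hx

lemma ncompat_split {A P : Finset (Fin n)}
    (h1 : ∃ x, x ∈ A ∧ x ∉ P) (h2 : ∃ x, x ∈ P ∧ x ∉ A)
    (h3 : ∃ x, x ∈ A ∧ x ∈ P) (h4 : ∃ x, x ∉ A ∧ x ∉ P) :
    ¬ SidesCompatible A P := by
  rw [sc_iff]
  obtain ⟨x1, hx1, hx1'⟩ := h1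
  obtain ⟨x2, hx2, hx2'⟩ := h2
  obtain ⟨x3, hx3, hx3'⟩ := h3
  obtain ⟨x4, hx4, hx4'⟩ := h4
  rintro (h | h | h | h)
  · exact hx1' (h _ hx1)
  · exact hx2' (h _ hx2)
  · exact h _ hx3 hx3'
  · exact (h x4).elim hx4 hx4'

end Aux
section Aux2

open Finset

variable {n : ℕ}

lemma exists_decomp (T : PhyloTree n) {A : Finset (Fin n)} (hA : A ∈ T.sides)
    (h2 : 2 ≤ A.card) :
    ∃ A1 A2, A1 ∈ T.sides ∧ A2 ∈ T.sides ∧ Disjoint A1 A2 ∧ A1 ∪ A2 = A := by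
  classical
  have hAuniv : A ≠ Finset.univ := (T.proper A hA).2
  set S : Finset (Finset (Fin n)) := T.sides.filter (fun B => B ⊂ A) with hSdef
  have hSne : S.Nonempty := by
    obtain ⟨x, hx⟩ := Finset.card_pos.mp (by omega : 0 < A.card)
    refine ⟨{x}, Finset.mem_filter.mpr ⟨T.singleton_mem x, ?_⟩⟩
    refine lt_of_le_of_ne (Finset.singleton_subset_iff.mpr hx) fun h => ?_
    have := congrArg Finset.card h
    simp at this
    omega
  obtain ⟨A1, hA1S, hmax1⟩ := S.exists_max_image (fun B => B.card) hSne
  obtain ⟨hA1, hA1lt⟩ := Finset.mem_filter.mp hA1S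
  have hA1sub : A1 ⊆ A := hA1lt.subset
  refine ⟨A1, A \ A1, hA1, ?_, Finset.disjoint_sdiff,
    Finset.union_sdiff_of_subset hA1sub⟩
  -- show A \ A1 ∈ T.sides via maximality
  apply T.maximal
  · exact Finset.sdiff_nonempty.mpr fun h => hA1lt.not_subset h
  · intro h
    apply hAuniv
    have h1 : A \ A1 ⊆ A := Finset.sdiff_subset
    rw [h] at h1
    exact Finset.univ_subset_iff.mp h1
  · intro B hB
    have hAB := T.compatible A hA B hB
    have hA1B := T.compatible A1 hA1 B hB
    rcases hAB with h | h | h | h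
    · exact Or.inl (Finset.sdiff_subset.trans h)
    · -- B ⊆ A
      rcases hA1B with h' | h' | h' | h'
      · -- A1 ⊆ B
        by_cases hBA : B = A
        · exact Or.inl (hBA ▸ Finset.sdiff_subset)
        · have hBS : B ∈ S := Finset.mem_filter.mpr ⟨hB, lt_of_le_of_ne h hBA⟩
          have : A1 = B := Finset.eq_of_subset_of_card_le h' (hmax1 B hBS)
          exact Or.inr <| Or.inr <| Or.inl (this ▸ Finset.sdiff_disjoint)
      · exact Or.inr <| Or.inr <| Or.inl (Finset.sdiff_disjoint.mono_right h')
      · exact Or.inr <| Or.inl (Finset.subset_sdiff.mpr ⟨h, h'.symm⟩)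
      · exfalso
        apply hAuniv
        apply Finset.univ_subset_iff.mp
        rw [← h']
        exact Finset.union_subset hA1sub h
    · exact Or.inr <| Or.inr <| Or.inl (h.mono_left Finset.sdiff_subset)
    · -- A ∪ B = univ
      rcases hA1B with h' | h' | h' | h'
      · -- A1 ⊆ B
        refine Or.inr <| Or.inr <| Or.inr <| Finset.eq_univ_iff_forall.mpr fun x => ?_
        rcases Finset.mem_union.mp (h ▸ Finset.mem_univ x : x ∈ A ∪ B) with hx | hx
        · by_cases hx1 : x ∈ A1
          · exact Finset.mem_union.mpr (Or.inr (h' hx1))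
          · exact Finset.mem_union.mpr (Or.inl (Finset.mem_sdiff.mpr ⟨hx, hx1⟩))
        · exact Finset.mem_union.mpr (Or.inr hx)
      · exfalso
        apply hAuniv
        apply Finset.univ_subset_iff.mp
        rw [← h]
        exact Finset.union_subset le_rfl (h'.trans hA1sub)
      · -- Disjoint A1 B
        have hBc : Bᶜ ∈ T.sides := T.compl_mem B hB
        have hA1Bc : A1 ⊆ Bᶜ := fun x hx =>
          Finset.mem_compl.mpr (Finset.disjoint_left.mp h' hx)
        have hBcA : Bᶜ ⊆ A := by
          intro x hx
          rcases Finset.mem_union.mp (h ▸ Finset.mem_univ x : x ∈ A ∪ B) with h0 | h0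
          · exact h0
          · exact absurd h0 (Finset.mem_compl.mp hx)
        by_cases heq : Bᶜ = A
        · have hBAc : B = Aᶜ := by rw [← heq, compl_compl]
          exact Or.inr <| Or.inr <| Or.inl
            (hBAc ▸ Disjoint.mono_left Finset.sdiff_subset disjoint_compl_right)
        · have hBcS : Bᶜ ∈ S := Finset.mem_filter.mpr ⟨hBc, lt_of_le_of_ne hBcA heq⟩
          have hA1eq : A1 = Bᶜ := Finset.eq_of_subset_of_card_le hA1Bc (hmax1 _ hBcS)
          refine Or.inl fun x hx => ?_
          have hx' := Finset.mem_sdiff.mp hx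
          by_contra hxB
          exact hx'.2 (hA1eq ▸ Finset.mem_compl.mpr hxB)
      · -- A1 ∪ B = univ
        refine Or.inl fun x hx => ?_
        have hx' := Finset.mem_sdiff.mp hx
        rcases Finset.mem_union.mp (h' ▸ Finset.mem_univ x : x ∈ A1 ∪ B) with h0 | h0
        · exact absurd h0 hx'.2
        · exact h0

end Aux2
section Aux3

open Finset

variable {n : ℕ}

lemma compat_new (T : PhyloTree n) {A A1 A2 B C : Finset (Fin n)}
    (hA : A ∈ T.sides) (hA1 : A1 ∈ T.sides) (hA2 : A2 ∈ T.sides)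
    (hB : B ∈ T.sides) (hC : C ∈ T.sides)
    (h12 : A1 ∪ A2 = A) (d12 : Disjoint A1 A2)
    (dAB : Disjoint A B) (dAC : Disjoint A C) (dBC : Disjoint B C)
    (hU : A ∪ B ∪ C = Finset.univ) :
    ∀ S ∈ T.sides, S ≠ A → S ≠ Aᶜ → SidesCompatible (A1 ∪ B) S := by
  classical
  intro S hS hSA hSAc
  have hAuniv : A ≠ Finset.univ := (T.proper A hA).2
  obtain ⟨xa1, hxa1⟩ := (T.proper A1 hA1).1
  obtain ⟨xa2, hxa2⟩ := (T.proper A2 hA2).1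
  obtain ⟨xb, hxb⟩ := (T.proper B hB).1
  obtain ⟨xc, hxc⟩ := (T.proper C hC).1
  have memA : ∀ x, x ∈ A ↔ (x ∈ A1 ∨ x ∈ A2) := fun x => by
    rw [← h12, Finset.mem_union]
  have pA1A : ∀ x, x ∈ A1 → x ∈ A := fun x hx => (memA x).mpr (Or.inl hx)
  have pA2A : ∀ x, x ∈ A2 → x ∈ A := fun x hx => (memA x).mpr (Or.inr hx)
  have pU : ∀ x : Fin n, x ∈ A ∨ x ∈ B ∨ x ∈ C := fun x => by
    have := hU ▸ Finset.mem_univ x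
    simpa [Finset.mem_union, or_assoc] using this
  have pAB : ∀ x, x ∈ A → x ∉ B := fun x hx => Finset.disjoint_left.mp dAB hx
  have pAC : ∀ x, x ∈ A → x ∉ C := fun x hx => Finset.disjoint_left.mp dAC hx
  have pBC : ∀ x, x ∈ B → x ∉ C := fun x hx => Finset.disjoint_left.mp dBC hx
  have p12 : ∀ x, x ∈ A1 → x ∉ A2 := fun x hx => Finset.disjoint_left.mp d12 hx
  rcases T.compatible A hA S hS with hAS | hSA' | dAS | hASu
  · -- A ⊆ S
    rcases T.compatible B hB S hS with hBS | hSB | dBS | hBSu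
    · exact Or.inl (Finset.union_subset (fun x hx => hAS (pA1A x hx)) hBS)
    · exact absurd (hSB (hAS (pA1A xa1 hxa1))) (pAB _ (pA1A xa1 hxa1))
    · rcases T.compatible C hC S hS with hCS | hSC | dCS | hCSu
      · refine Or.inr <| Or.inr <| Or.inr <| Finset.eq_univ_iff_forall.mpr fun x => ?_
        simp only [Finset.mem_union]
        rcases pU x with hx | hx | hx
        · exact Or.inr (hAS hx)
        · exact Or.inl (Or.inr hx)
        · exact Or.inr (hCS hx)
      · exact absurd (hSC (hAS (pA1A xa1 hxa1))) (pAC _ (pA1A xa1 hxa1))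
      · refine absurd (Finset.Subset.antisymm ?_ hAS) hSA
        intro x hx
        rcases pU x with h | h | h
        · exact h
        · exact absurd hx (Finset.disjoint_left.mp dBS h)
        · exact absurd hx (Finset.disjoint_left.mp dCS h)
      · have hxbS : xb ∈ S := by
          rcases Finset.mem_union.mp (hCSu ▸ Finset.mem_univ xb : xb ∈ C ∪ S) with h | h
          · exact absurd h (pBC xb hxb)
          · exact h
        exact absurd hxbS (Finset.disjoint_left.mp dBS hxb)
    · refine Or.inr <| Or.inr <| Or.inr <| Finset.eq_univ_iff_forall.mpr fun x => ?_
      simp only [Finset.mem_union]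
      rcases Finset.mem_union.mp (hBSu ▸ Finset.mem_univ x : x ∈ B ∪ S) with h | h
      · exact Or.inl (Or.inr h)
      · exact Or.inr h
  · -- S ⊆ A
    rcases T.compatible A1 hA1 S hS with hA1S | hSA1 | dA1S | hA1Su
    · rcases T.compatible A2 hA2 S hS with hA2S | hSA2 | dA2S | hA2Su
      · refine absurd (Finset.Subset.antisymm hSA' ?_) hSA
        intro x hx
        rcases (memA x).mp hx with h | h
        · exact hA1S h
        · exact hA2S h
      · exact absurd (hSA2 (hA1S hxa1)) (p12 xa1 hxa1)
      · refine Or.inr <| Or.inl fun x hx => ?_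
        rcases (memA x).mp (hSA' hx) with h | h
        · exact Finset.mem_union.mpr (Or.inl h)
        · exact absurd hx (Finset.disjoint_left.mp dA2S h)
      · refine absurd ?_ hAuniv
        apply Finset.univ_subset_iff.mp
        rw [← hA2Su]
        exact Finset.union_subset (fun x hx => pA2A x hx) hSA'
    · exact Or.inr <| Or.inl (fun x hx => Finset.mem_union.mpr (Or.inl (hSA1 hx)))
    · refine Or.inr <| Or.inr <| Or.inl (Finset.disjoint_left.mpr fun x hx => ?_)
      rcases Finset.mem_union.mp hx with h | h
      · exact Finset.disjoint_left.mp dA1S h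
      · exact fun hxS => pAB x (hSA' hxS) h
    · refine absurd ?_ hAuniv
      apply Finset.univ_subset_iff.mp
      rw [← hA1Su]
      exact Finset.union_subset (fun x hx => pA1A x hx) hSA'
  · -- Disjoint A S
    rcases T.compatible B hB S hS with hBS | hSB | dBS | hBSu
    · rcases T.compatible C hC S hS with hCS | hSC | dCS | hCSu
      · refine absurd (Finset.ext fun x => ?_) hSAc
        simp only [Finset.mem_compl]
        constructor
        · exact fun hx => Finset.disjoint_right.mp dAS hx
        · intro hx
          rcases pU x with h | h | h
          · exact absurd h hx
          · exact hBS h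
          · exact hCS h
      · exact absurd (hSC (hBS hxb)) (pBC xb hxb)
      · refine Or.inr <| Or.inl fun x hx => ?_
        rcases pU x with h | h | h
        · exact absurd hx (Finset.disjoint_left.mp dAS h)
        · exact Finset.mem_union.mpr (Or.inr h)
        · exact absurd hx (Finset.disjoint_left.mp dCS h)
      · obtain ⟨xa, hxa⟩ := (T.proper A hA).1
        have : xa ∈ S := by
          rcases Finset.mem_union.mp (hCSu ▸ Finset.mem_univ xa : xa ∈ C ∪ S) with h | h
          · exact absurd h (pAC xa hxa)
          · exact h
        exact absurd this (Finset.disjoint_left.mp dAS hxa)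
    · exact Or.inr <| Or.inl (fun x hx => Finset.mem_union.mpr (Or.inr (hSB hx)))
    · refine Or.inr <| Or.inr <| Or.inl (Finset.disjoint_left.mpr fun x hx => ?_)
      rcases Finset.mem_union.mp hx with h | h
      · exact Finset.disjoint_left.mp dAS (pA1A x h)
      · exact Finset.disjoint_left.mp dBS h
    · refine Or.inr <| Or.inr <| Or.inr <| Finset.eq_univ_iff_forall.mpr fun x => ?_
      simp only [Finset.mem_union]
      rcases Finset.mem_union.mp (hBSu ▸ Finset.mem_univ x : x ∈ B ∪ S) with h | h
      · exact Or.inl (Or.inr h)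
      · exact Or.inr h
  · -- A ∪ S = univ
    have hAcS : ∀ x, x ∉ A → x ∈ S := fun x hx => by
      rcases Finset.mem_union.mp (hASu ▸ Finset.mem_univ x : x ∈ A ∪ S) with h | h
      · exact absurd h hx
      · exact h
    rcases T.compatible A1 hA1 S hS with hA1S | hSA1 | dA1S | hA1Su
    · refine Or.inl fun x hx => ?_
      rcases Finset.mem_union.mp hx with h | h
      · exact hA1S h
      · exact hAcS x (fun hA' => pAB x hA' h)
    · exact absurd (hAcS xb (fun h => pAB xb h hxb)) fun h => pAB xb (pA1A xb (hSA1 h)) hxb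
    · rcases T.compatible A2 hA2 S hS with hA2S | hSA2 | dA2S | hA2Su
      · refine Or.inr <| Or.inr <| Or.inr <| Finset.eq_univ_iff_forall.mpr fun x => ?_
        simp only [Finset.mem_union]
        by_cases hx1 : x ∈ A1
        · exact Or.inl (Or.inl hx1)
        · by_cases hxA : x ∈ A
          · rcases (memA x).mp hxA with h | h
            · exact absurd h hx1
            · exact Or.inr (hA2S h)
          · exact Or.inr (hAcS x hxA)
      · exact absurd (pA2A xb (hSA2 (hAcS xb (fun h => pAB xb h hxb)))) fun h => pAB xb h hxb
      · refine absurd (Finset.ext fun x => ?_) hSAc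
        simp only [Finset.mem_compl]
        constructor
        · intro hx hxA
          rcases (memA x).mp hxA with h | h
          · exact Finset.disjoint_left.mp dA1S h hx
          · exact Finset.disjoint_left.mp dA2S h hx
        · exact fun hx => hAcS x hx
      · have : xa1 ∈ S := by
          rcases Finset.mem_union.mp (hA2Su ▸ Finset.mem_univ xa1 : xa1 ∈ A2 ∪ S) with h | h
          · exact absurd h (p12 xa1 hxa1)
          · exact h
        exact absurd this (Finset.disjoint_left.mp dA1S hxa1)
    · refine Or.inr <| Or.inr <| Or.inr <| Finset.eq_univ_iff_forall.mpr fun x => ?_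
      simp only [Finset.mem_union]
      rcases Finset.mem_union.mp (hA1Su ▸ Finset.mem_univ x : x ∈ A1 ∪ S) with h | h
      · exact Or.inl (Or.inl h)
      · exact Or.inr h

end Aux3
section Aux4

open Finset

variable {n : ℕ}

private def wgt {n : ℕ} (S : Finset (Fin n)) : ℕ :=
  if 2 ≤ S.card ∧ 2 ≤ Sᶜ.card then S.card * Sᶜ.card else 0

private lemma gamma_eq (T : PhyloTree n) :
    T.gamma = (∑ S ∈ T.sides, wgt S) / 2 := by
  unfold PhyloTree.gamma wgt
  rw [Finset.sum_filter]

private lemma wgt_eq {S : Finset (Fin n)} (h1 : 2 ≤ S.card) (h2 : 2 ≤ Sᶜ.card) :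
    wgt S = S.card * Sᶜ.card := if_pos ⟨h1, h2⟩

end Aux4
section Aux5

open Finset

variable {n : ℕ}

private lemma key (T : PhyloTree n) (hmax : ∀ T' : PhyloTree n, T'.gamma ≤ T.gamma)
    {A B C : Finset (Fin n)} (hA : A ∈ T.sides) (hB : B ∈ T.sides) (hC : C ∈ T.sides)
    (dAB : Disjoint A B) (dAC : Disjoint A C) (dBC : Disjoint B C)
    (hU : A ∪ B ∪ C = Finset.univ)
    (ha : 2 ≤ A.card) (hb : 2 ≤ B.card) (hc : 2 ≤ C.card)
    (hab : A.card ≤ B.card) (hac : A.card ≤ C.card) : False := by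
  classical
  obtain ⟨A1, A2, hA1, hA2, d12, h12⟩ := exists_decomp T hA ha
  have hAuniv : A ≠ Finset.univ := (T.proper A hA).2
  obtain ⟨xa1, hxa1⟩ := (T.proper A1 hA1).1
  obtain ⟨xa2, hxa2⟩ := (T.proper A2 hA2).1
  obtain ⟨xb, hxb⟩ := (T.proper B hB).1
  obtain ⟨xc, hxc⟩ := (T.proper C hC).1
  have memA : ∀ x, x ∈ A ↔ (x ∈ A1 ∨ x ∈ A2) := fun x => by
    rw [← h12, Finset.mem_union]
  have pA1A : ∀ x, x ∈ A1 → x ∈ A := fun x hx => (memA x).mpr (Or.inl hx)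
  have pA2A : ∀ x, x ∈ A2 → x ∈ A := fun x hx => (memA x).mpr (Or.inr hx)
  have pU : ∀ x : Fin n, x ∈ A ∨ x ∈ B ∨ x ∈ C := fun x => by
    have := hU ▸ Finset.mem_univ x
    simpa [Finset.mem_union, or_assoc] using this
  have pAB : ∀ x, x ∈ A → x ∉ B := fun x hx => Finset.disjoint_left.mp dAB hx
  have pAC : ∀ x, x ∈ A → x ∉ C := fun x hx => Finset.disjoint_left.mp dAC hx
  have pBC : ∀ x, x ∈ B → x ∉ C := fun x hx => Finset.disjoint_left.mp dBC hx
  have p12 : ∀ x, x ∈ A1 → x ∉ A2 := fun x hx => Finset.disjoint_left.mp d12 hx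
  -- the new sides
  set P : Finset (Fin n) := A1 ∪ B with hPdef
  set Q : Finset (Fin n) := A2 ∪ C with hQdef
  have pmemP : ∀ x, x ∈ P ↔ (x ∈ A1 ∨ x ∈ B) := fun x => Finset.mem_union
  have pmemQ : ∀ x, x ∈ Q ↔ (x ∈ A2 ∨ x ∈ C) := fun x => Finset.mem_union
  have pnotPQ : ∀ x, x ∈ P → x ∉ Q := by
    intro x hx hx'
    rcases (pmemP x).mp hx with h | h <;> rcases (pmemQ x).mp hx' with h' | h'
    · exact p12 x h h'
    · exact pAC x (pA1A x h) h'
    · exact pAB x (pA2A x h') h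
    · exact pBC x h h'
  have hPQc : Pᶜ = Q := by
    ext x
    simp only [Finset.mem_compl]
    constructor
    · intro hx
      rcases pU x with h | h | h
      · rcases (memA x).mp h with h' | h'
        · exact absurd ((pmemP x).mpr (Or.inl h')) hx
        · exact (pmemQ x).mpr (Or.inl h')
      · exact absurd ((pmemP x).mpr (Or.inr h)) hx
      · exact (pmemQ x).mpr (Or.inr h)
    · exact fun hx hx' => pnotPQ x hx' hx
  have hQPc : Qᶜ = P := by rw [← hPQc, compl_compl]
  have hAc : Aᶜ = B ∪ C := by
    ext x
    simp only [Finset.mem_compl, Finset.mem_union]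
    constructor
    · intro hx
      rcases pU x with h | h | h
      · exact absurd h hx
      · exact Or.inl h
      · exact Or.inr h
    · rintro (h | h) hx
      · exact pAB x hx h
      · exact pAC x hx h
  have pMemAc : ∀ x, x ∈ Aᶜ ↔ (x ∈ B ∨ x ∈ C) := fun x => by
    rw [hAc]; exact Finset.mem_union
  -- incompatibilities
  have nAP : ¬ SidesCompatible A P :=
    ncompat_split ⟨xa2, pA2A xa2 hxa2, fun h => by
        rcases (pmemP xa2).mp h with h' | h'
        · exact p12 xa2 h' hxa2
        · exact pAB xa2 (pA2A xa2 hxa2) h'⟩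
      ⟨xb, (pmemP xb).mpr (Or.inr hxb), fun h => pAB xb h hxb⟩
      ⟨xa1, pA1A xa1 hxa1, (pmemP xa1).mpr (Or.inl hxa1)⟩
      ⟨xc, fun h => pAC xc h hxc, fun h => by
        rcases (pmemP xc).mp h with h' | h'
        · exact pAC xc (pA1A xc h') hxc
        · exact pBC xc h' hxc⟩
  have nAQ : ¬ SidesCompatible A Q :=
    ncompat_split ⟨xa1, pA1A xa1 hxa1, fun h => by
        rcases (pmemQ xa1).mp h with h' | h'
        · exact p12 xa1 hxa1 h'
        · exact pAC xa1 (pA1A xa1 hxa1) h'⟩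
      ⟨xc, (pmemQ xc).mpr (Or.inr hxc), fun h => pAC xc h hxc⟩
      ⟨xa2, pA2A xa2 hxa2, (pmemQ xa2).mpr (Or.inl hxa2)⟩
      ⟨xb, fun h => pAB xb h hxb, fun h => by
        rcases (pmemQ xb).mp h with h' | h'
        · exact pAB xb (pA2A xb h') hxb
        · exact pBC xb hxb h'⟩
  have hPns : P ∉ T.sides := fun h => nAP (T.compatible A hA P h)
  have hQns : Q ∉ T.sides := fun h => nAQ (T.compatible A hA Q h)
  have hPneQ : P ≠ Q := fun h =>
    pnotPQ xb ((pmemP xb).mpr (Or.inr hxb)) (h ▸ (pmemP xb).mpr (Or.inr hxb))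
  have hAneAc : A ≠ Aᶜ := fun h => by
    have hx : xa1 ∈ Aᶜ := h ▸ pA1A xa1 hxa1
    exact Finset.mem_compl.mp hx (pA1A xa1 hxa1)
  -- the erased set
  set E : Finset (Finset (Fin n)) := (T.sides.erase A).erase Aᶜ with hEdef
  have hEmem : ∀ {S : Finset (Fin n)}, S ∈ E ↔ (S ∈ T.sides ∧ S ≠ A ∧ S ≠ Aᶜ) := by
    intro S
    simp only [hEdef, Finset.mem_erase]
    tauto
  have hPE : P ∉ E := fun h => hPns (hEmem.mp h).1
  have hQE : Q ∉ E := fun h => hQns (hEmem.mp h).1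
  have hPQE : P ∉ insert Q E := by
    simp only [Finset.mem_insert]
    rintro (h | h)
    · exact hPneQ h
    · exact hPE h
  -- properness of the new sides
  have hP2 : 2 ≤ P.card := le_trans hb (Finset.card_le_card fun x hx => (pmemP x).mpr (Or.inr hx))
  have hQ2 : 2 ≤ Q.card := le_trans hc (Finset.card_le_card fun x hx => (pmemQ x).mpr (Or.inr hx))
  have hPuniv : P ≠ Finset.univ := fun h => by
    have h2 : Pᶜ = ∅ := by rw [h, Finset.compl_univ]
    rw [hPQc] at h2
    exact Finset.notMem_empty xa2 (h2 ▸ (pmemQ xa2).mpr (Or.inl hxa2))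
  have hQuniv : Q ≠ Finset.univ := fun h => by
    have h2 : Qᶜ = ∅ := by rw [h, Finset.compl_univ]
    rw [hQPc] at h2
    exact Finset.notMem_empty xb (h2 ▸ (pmemP xb).mpr (Or.inr hxb))
  -- compatibility of new sides with old ones
  have hU' : A ∪ C ∪ B = Finset.univ := by rw [Finset.union_right_comm]; exact hU
  have h12' : A2 ∪ A1 = A := by rw [Finset.union_comm]; exact h12
  have compatP : ∀ S ∈ E, SidesCompatible P S := fun S hS => by
    obtain ⟨h1, h2, h3⟩ := hEmem.mp hS
    exact compat_new T hA hA1 hA2 hB hC h12 d12 dAB dAC dBC hU S h1 h2 h3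
  have compatQ : ∀ S ∈ E, SidesCompatible Q S := fun S hS => by
    obtain ⟨h1, h2, h3⟩ := hEmem.mp hS
    exact compat_new T hA hA2 hA1 hC hB h12' d12.symm dAC dAB dBC.symm hU' S h1 h2 h3
  have compatPQ : SidesCompatible P Q := by
    refine Or.inr <| Or.inr <| Or.inr <| Finset.eq_univ_iff_forall.mpr fun x => ?_
    rw [Finset.mem_union, pmemP, pmemQ]
    rcases pU x with h | h | h
    · rcases (memA x).mp h with h' | h'
      · exact Or.inl (Or.inl h')
      · exact Or.inr (Or.inl h')
    · exact Or.inl (Or.inr h)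
    · exact Or.inr (Or.inr h)
  -- membership of the old pieces in E
  have hBE : B ∈ E := hEmem.mpr ⟨hB, fun h => pAB xb (h ▸ hxb) hxb,
    fun h => pBC xc (h ▸ (pMemAc xc).mpr (Or.inr hxc)) hxc⟩
  have hCE : C ∈ E := hEmem.mpr ⟨hC, fun h => pAC xc (h ▸ hxc) hxc,
    fun h => pBC xb hxb (h ▸ (pMemAc xb).mpr (Or.inl hxb))⟩
  have hA1E : A1 ∈ E := hEmem.mpr ⟨hA1,
    fun h => p12 xa2 (h ▸ pA2A xa2 hxa2) hxa2,
    fun h => Finset.mem_compl.mp (h ▸ hxa1) (pA1A xa1 hxa1)⟩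
  have hA2E : A2 ∈ E := hEmem.mpr ⟨hA2,
    fun h => p12 xa1 hxa1 (h ▸ pA1A xa1 hxa1),
    fun h => Finset.mem_compl.mp (h ▸ hxa2) (pA2A xa2 hxa2)⟩
  -- the new tree
  set T' : PhyloTree n :=
    { sides := insert P (insert Q E)
      proper := by
        intro S hS
        rcases Finset.mem_insert.mp hS with h | h
        · exact h ▸ ⟨⟨xb, (pmemP xb).mpr (Or.inr hxb)⟩, hPuniv⟩
        rcases Finset.mem_insert.mp h with h | h
        · exact h ▸ ⟨⟨xc, (pmemQ xc).mpr (Or.inr hxc)⟩, hQuniv⟩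
        · exact T.proper S (hEmem.mp h).1
      compl_mem := by
        intro S hS
        rcases Finset.mem_insert.mp hS with h | h
        · subst h
          rw [hPQc]
          exact Finset.mem_insert.mpr (Or.inr (Finset.mem_insert_self _ _))
        rcases Finset.mem_insert.mp h with h | h
        · subst h
          rw [hQPc]
          exact Finset.mem_insert_self _ _
        · obtain ⟨h1, h2, h3⟩ := hEmem.mp h
          refine Finset.mem_insert.mpr (Or.inr (Finset.mem_insert.mpr (Or.inr
            (hEmem.mpr ⟨T.compl_mem S h1, ?_, ?_⟩))))
          · intro hq
            exact h3 (by rw [← hq, compl_compl])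
          · intro hq
            exact h2 (by
              have := congrArg (·ᶜ) hq
              simpa [compl_compl] using this)
      singleton_mem := by
        intro x
        refine Finset.mem_insert.mpr (Or.inr (Finset.mem_insert.mpr (Or.inr
          (hEmem.mpr ⟨T.singleton_mem x, ?_, ?_⟩))))
        · intro h
          have := congrArg Finset.card h
          simp only [Finset.card_singleton] at this
          omega
        · intro h
          have h2 : 2 ≤ Aᶜ.card := by
            refine le_trans hb (Finset.card_le_card fun y hy => ?_)
            exact (pMemAc y).mpr (Or.inl hy)
          have := congrArg Finset.card h
          simp only [Finset.card_singleton] at this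
          omega
      compatible := by
        intro S hS S' hS'
        rcases Finset.mem_insert.mp hS with h | h
        · subst h
          rcases Finset.mem_insert.mp hS' with h' | h'
          · exact h' ▸ Or.inl le_rfl
          rcases Finset.mem_insert.mp h' with h' | h'
          · exact h' ▸ compatPQ
          · exact compatP S' h'
        rcases Finset.mem_insert.mp h with h | h
        · subst h
          rcases Finset.mem_insert.mp hS' with h' | h'
          · exact h' ▸ sc_symm compatPQ
          rcases Finset.mem_insert.mp h' with h' | h'
          · exact h' ▸ Or.inl le_rfl
          · exact compatQ S' h'
        · rcases Finset.mem_insert.mp hS' with h' | h'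
          · exact h' ▸ sc_symm (compatP S h)
          rcases Finset.mem_insert.mp h' with h' | h'
          · exact h' ▸ sc_symm (compatQ S h)
          · exact T.compatible S (hEmem.mp h).1 S' (hEmem.mp h').1
      maximal := by
        intro S hSne hSuniv hcomp
        have hcP : SidesCompatible S P := sc_symm (sc_symm (hcomp P (Finset.mem_insert_self _ _)))
        have hcQ : SidesCompatible S Q :=
          hcomp Q (Finset.mem_insert.mpr (Or.inr (Finset.mem_insert_self _ _)))
        have hcE : ∀ X ∈ E, SidesCompatible S X := fun X hX =>
          hcomp X (Finset.mem_insert.mpr (Or.inr (Finset.mem_insert.mpr (Or.inr hX))))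
        by_cases hSA : SidesCompatible S A
        · have hmem : S ∈ T.sides := by
            refine T.maximal S hSne hSuniv fun X hX => ?_
            by_cases hXA : X = A
            · exact hXA ▸ hSA
            by_cases hXAc : X = Aᶜ
            · exact hXAc ▸ sc_compl hSA
            · exact hcE X (hEmem.mpr ⟨hX, hXA, hXAc⟩)
          have hSneA : S ≠ A := by
            intro h
            apply nAP
            rw [← h]
            exact hcP
          have hSneAc : S ≠ Aᶜ := by
            intro h
            apply nAP
            have h1 : SidesCompatible Aᶜ P := by rw [← h]; exact hcP
            have h2 : SidesCompatible P A := by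
              have := sc_compl (sc_symm h1)
              rwa [compl_compl] at this
            exact sc_symm h2
          exact Finset.mem_insert.mpr (Or.inr (Finset.mem_insert.mpr (Or.inr
            (hEmem.mpr ⟨hmem, hSneA, hSneAc⟩))))
        · -- S is incompatible with A: S must be P or Q
          unfold SidesCompatible at hSA
          push_neg at hSA
          obtain ⟨ns1, ns2, ns3, ns4⟩ := hSA
          obtain ⟨y1, hy1S, hy1A⟩ := Finset.not_subset.mp ns1
          obtain ⟨y2, hy2A, hy2S⟩ := Finset.not_subset.mp ns2
          obtain ⟨y3, hy3S, hy3A⟩ := Finset.not_disjoint_iff.mp ns3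
          obtain ⟨y4, hy4⟩ : ∃ x, x ∉ S ∪ A := by
            by_contra hcon
            push_neg at hcon
            exact ns4 (Finset.eq_univ_iff_forall.mpr hcon)
          rw [Finset.mem_union] at hy4
          push_neg at hy4
          obtain ⟨hy4S, hy4A⟩ := hy4
          -- from compatibility with B: B ⊆ S or Disjoint S B
          have hBalt : B ⊆ S ∨ Disjoint S B := by
            rcases hcE B hBE with h | h | h | h
            · exact absurd (pAB y3 hy3A) (fun f => f (h hy3S))
            · exact Or.inl h
            · exact Or.inr h
            · exfalso
              rcases Finset.mem_union.mp (h ▸ Finset.mem_univ y2 : y2 ∈ S ∪ B) with h' | h'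
              · exact hy2S h'
              · exact pAB y2 hy2A h'
          have hCalt : C ⊆ S ∨ Disjoint S C := by
            rcases hcE C hCE with h | h | h | h
            · exact absurd (pAC y3 hy3A) (fun f => f (h hy3S))
            · exact Or.inl h
            · exact Or.inr h
            · exfalso
              rcases Finset.mem_union.mp (h ▸ Finset.mem_univ y2 : y2 ∈ S ∪ C) with h' | h'
              · exact hy2S h'
              · exact pAC y2 hy2A h'
          rcases hBalt with hBs | dSB
          · rcases hCalt with hCs | dSC
            · exfalso
              rcases pU y4 with h | h | h
              · exact hy4A h
              · exact hy4S (hBs h)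
              · exact hy4S (hCs h)
            · -- B ⊆ S, Disjoint S C : S = P or S = A2 ∪ B
              have hA1alt : A1 ⊆ S ∨ Disjoint S A1 := by
                rcases hcE A1 hA1E with h | h | h | h
                · exact absurd (pAB xb (pA1A xb (h (hBs hxb)))) (fun f => f hxb)
                · exact Or.inl h
                · exact Or.inr h
                · exfalso
                  rcases Finset.mem_union.mp (h ▸ Finset.mem_univ xc : xc ∈ S ∪ A1) with h' | h'
                  · exact Finset.disjoint_left.mp dSC h' hxc
                  · exact pAC xc (pA1A xc h') hxc
              have hA2alt : A2 ⊆ S ∨ Disjoint S A2 := by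
                rcases hcE A2 hA2E with h | h | h | h
                · exact absurd (pAB xb (pA2A xb (h (hBs hxb)))) (fun f => f hxb)
                · exact Or.inl h
                · exact Or.inr h
                · exfalso
                  rcases Finset.mem_union.mp (h ▸ Finset.mem_univ xc : xc ∈ S ∪ A2) with h' | h'
                  · exact Finset.disjoint_left.mp dSC h' hxc
                  · exact pAC xc (pA2A xc h') hxc
              rcases hA1alt with h1s | dS1
              · rcases hA2alt with h2s | dS2
                · exfalso
                  rcases (memA y2).mp hy2A with h | h
                  · exact hy2S (h1s h)
                  · exact hy2S (h2s h)
                · -- A1 ⊆ S, Disjoint S A2 : S = P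
                  have hSP : S = P := by
                    ext x
                    rw [pmemP x]
                    constructor
                    · intro hx
                      rcases pU x with h | h | h
                      · rcases (memA x).mp h with h' | h'
                        · exact Or.inl h'
                        · exact absurd h' (Finset.disjoint_left.mp dS2 hx)
                      · exact Or.inr h
                      · exact absurd h (Finset.disjoint_left.mp dSC hx)
                    · rintro (hx | hx)
                      · exact h1s hx
                      · exact hBs hx
                  exact Finset.mem_insert.mpr (Or.inl hSP)
              · rcases hA2alt with h2s | dS2
                · -- A2 ⊆ S, Disjoint S A1 : S = A2 ∪ B, incompatible with Q
                  exfalso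
                  have hSeq : S = A2 ∪ B := by
                    ext x
                    rw [Finset.mem_union]
                    constructor
                    · intro hx
                      rcases pU x with h | h | h
                      · rcases (memA x).mp h with h' | h'
                        · exact absurd h' (Finset.disjoint_left.mp dS1 hx)
                        · exact Or.inl h'
                      · exact Or.inr h
                      · exact absurd h (Finset.disjoint_left.mp dSC hx)
                    · rintro (hx | hx)
                      · exact h2s hx
                      · exact hBs hx
                  refine ncompat_split ?_ ?_ ?_ ?_ (hSeq ▸ hcQ)
                    <;> simp only [Finset.mem_union, pmemQ]
                  · exact ⟨xb, Or.inr hxb, by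
                      rintro (h | h)
                      · exact pAB xb (pA2A xb h) hxb
                      · exact pBC xb hxb h⟩
                  · exact ⟨xc, Or.inr hxc, by
                      rintro (h | h)
                      · exact pAC xc (pA2A xc h) hxc
                      · exact pBC xc h hxc⟩
                  · exact ⟨xa2, Or.inl hxa2, Or.inl hxa2⟩
                  · exact ⟨xa1, by
                      rintro (h | h)
                      · exact p12 xa1 hxa1 h
                      · exact pAB xa1 (pA1A xa1 hxa1) h, by
                      rintro (h | h)
                      · exact p12 xa1 hxa1 h
                      · exact pAC xa1 (pA1A xa1 hxa1) h⟩
                · exfalso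
                  rcases (memA y3).mp hy3A with h | h
                  · exact Finset.disjoint_left.mp dS1 hy3S h
                  · exact Finset.disjoint_left.mp dS2 hy3S h
          · rcases hCalt with hCs | dSC
            · -- C ⊆ S, Disjoint S B : S = Q or S = A1 ∪ C
              have hA1alt : A1 ⊆ S ∨ Disjoint S A1 := by
                rcases hcE A1 hA1E with h | h | h | h
                · exact absurd (pAC xc (pA1A xc (h (hCs hxc)))) (fun f => f hxc)
                · exact Or.inl h
                · exact Or.inr h
                · exfalso
                  rcases Finset.mem_union.mp (h ▸ Finset.mem_univ xb : xb ∈ S ∪ A1) with h' | h'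
                  · exact Finset.disjoint_left.mp dSB h' hxb
                  · exact pAB xb (pA1A xb h') hxb
              have hA2alt : A2 ⊆ S ∨ Disjoint S A2 := by
                rcases hcE A2 hA2E with h | h | h | h
                · exact absurd (pAC xc (pA2A xc (h (hCs hxc)))) (fun f => f hxc)
                · exact Or.inl h
                · exact Or.inr h
                · exfalso
                  rcases Finset.mem_union.mp (h ▸ Finset.mem_univ xb : xb ∈ S ∪ A2) with h' | h'
                  · exact Finset.disjoint_left.mp dSB h' hxb
                  · exact pAB xb (pA2A xb h') hxb
              rcases hA2alt with h2s | dS2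
              · rcases hA1alt with h1s | dS1
                · exfalso
                  rcases (memA y2).mp hy2A with h | h
                  · exact hy2S (h1s h)
                  · exact hy2S (h2s h)
                · -- A2 ⊆ S, Disjoint S A1 : S = Q
                  have hSQ : S = Q := by
                    ext x
                    rw [pmemQ x]
                    constructor
                    · intro hx
                      rcases pU x with h | h | h
                      · rcases (memA x).mp h with h' | h'
                        · exact absurd h' (Finset.disjoint_left.mp dS1 hx)
                        · exact Or.inl h'
                      · exact absurd h (Finset.disjoint_left.mp dSB hx)
                      · exact Or.inr h
                    · rintro (hx | hx)
                      · exact h2s hx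
                      · exact hCs hx
                  exact Finset.mem_insert.mpr (Or.inr (Finset.mem_insert.mpr (Or.inl hSQ)))
              · rcases hA1alt with h1s | dS1
                · -- A1 ⊆ S, Disjoint S A2 : S = A1 ∪ C, incompatible with P
                  exfalso
                  have hSeq : S = A1 ∪ C := by
                    ext x
                    rw [Finset.mem_union]
                    constructor
                    · intro hx
                      rcases pU x with h | h | h
                      · rcases (memA x).mp h with h' | h'
                        · exact Or.inl h'
                        · exact absurd h' (Finset.disjoint_left.mp dS2 hx)
                      · exact absurd h (Finset.disjoint_left.mp dSB hx)
                      · exact Or.inr h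
                    · rintro (hx | hx)
                      · exact h1s hx
                      · exact hCs hx
                  refine ncompat_split ?_ ?_ ?_ ?_ (hSeq ▸ hcP)
                    <;> simp only [Finset.mem_union, pmemP]
                  · exact ⟨xc, Or.inr hxc, by
                      rintro (h | h)
                      · exact pAC xc (pA1A xc h) hxc
                      · exact pBC xc h hxc⟩
                  · exact ⟨xb, Or.inr hxb, by
                      rintro (h | h)
                      · exact pAB xb (pA1A xb h) hxb
                      · exact pBC xb hxb h⟩
                  · exact ⟨xa1, Or.inl hxa1, Or.inl hxa1⟩
                  · exact ⟨xa2, by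
                      rintro (h | h)
                      · exact p12 xa2 h hxa2
                      · exact pAC xa2 (pA2A xa2 hxa2) h, by
                      rintro (h | h)
                      · exact p12 xa2 h hxa2
                      · exact pAB xa2 (pA2A xa2 hxa2) h⟩
                · exfalso
                  rcases (memA y3).mp hy3A with h | h
                  · exact Finset.disjoint_left.mp dS1 hy3S h
                  · exact Finset.disjoint_left.mp dS2 hy3S h
            · -- both disjoint: S ⊆ A, contra
              exfalso
              rcases pU y1 with h | h | h
              · exact hy1A h
              · exact Finset.disjoint_left.mp dSB hy1S h
              · exact Finset.disjoint_left.mp dSC hy1S h } with hT'def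
  -- gamma computation
  have dA1B : Disjoint A1 B := Finset.disjoint_left.mpr fun x hx => pAB x (pA1A x hx)
  have dA2C : Disjoint A2 C := Finset.disjoint_left.mpr fun x hx => pAC x (pA2A x hx)
  have cA : A.card = A1.card + A2.card := by
    rw [← h12, Finset.card_union_of_disjoint d12]
  have cAc : Aᶜ.card = B.card + C.card := by
    rw [hAc, Finset.card_union_of_disjoint dBC]
  have cP : P.card = A1.card + B.card := by
    rw [hPdef, Finset.card_union_of_disjoint dA1B]
  have cQ : Q.card = A2.card + C.card := by
    rw [hQdef, Finset.card_union_of_disjoint dA2C]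
  have na1 : 1 ≤ A1.card := Finset.card_pos.mpr ⟨xa1, hxa1⟩
  have na2 : 1 ≤ A2.card := Finset.card_pos.mpr ⟨xa2, hxa2⟩
  have hAc2 : 2 ≤ Aᶜ.card := by omega
  have wA : wgt A = A.card * Aᶜ.card := wgt_eq ha hAc2
  have wAc : wgt Aᶜ = A.card * Aᶜ.card := by
    rw [wgt_eq hAc2 (by rw [compl_compl]; exact ha), compl_compl, Nat.mul_comm]
  have hPc2 : 2 ≤ Pᶜ.card := by rw [hPQc]; exact hQ2
  have hQc2 : 2 ≤ Qᶜ.card := by rw [hQPc]; exact hP2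
  have wP : wgt P = P.card * Q.card := by rw [wgt_eq hP2 hPc2, hPQc]
  have wQ : wgt Q = P.card * Q.card := by rw [wgt_eq hQ2 hQc2, hQPc, Nat.mul_comm]
  have hAcs : Aᶜ ∈ T.sides.erase A :=
    Finset.mem_erase.mpr ⟨hAneAc.symm, T.compl_mem A hA⟩
  have hs1 : ∑ x ∈ T.sides.erase A, wgt x + wgt A = ∑ x ∈ T.sides, wgt x :=
    Finset.sum_erase_add _ _ hA
  have hs2 : ∑ x ∈ E, wgt x + wgt Aᶜ = ∑ x ∈ T.sides.erase A, wgt x := by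
    rw [hEdef]
    exact Finset.sum_erase_add _ _ hAcs
  have hprod : A.card * Aᶜ.card + 1 ≤ P.card * Q.card := by
    have hb1 : A2.card + 1 ≤ B.card := by
      have := cA ▸ hab
      omega
    have hc1 : A1.card + 1 ≤ C.card := by
      have := cA ▸ hac
      omega
    obtain ⟨u, hu⟩ := Nat.exists_eq_add_of_le hb1
    obtain ⟨v, hv⟩ := Nat.exists_eq_add_of_le hc1
    rw [cA, cAc, cP, cQ, hu, hv]
    nlinarith [Nat.zero_le (u * v), Nat.zero_le (A1.card * A2.card)]
  have hineq := hmax T'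
  rw [gamma_eq T', gamma_eq T] at hineq
  have hsides' : T'.sides = insert P (insert Q E) := rfl
  rw [hsides', Finset.sum_insert hPQE, Finset.sum_insert hQE, ← hs1, ← hs2,
    wA, wAc, wP, wQ] at hineq
  set m := A.card * Aᶜ.card with hm
  set p := P.card * Q.card with hp
  set s := ∑ x ∈ E, wgt x with hs
  omega

end Aux5

/-- Lemma 7: if `T ∈ 𝒯_n` (`n ≥ 4`) satisfies
`Γ(T) ≥ Γ(T')` for all `T' ∈ 𝒯_n`, then `T` is a caterpillar. -/
theorem gamma_maximiser_is_caterpillar (n : ℕ) (hn : 4 ≤ n)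
    (T : PhyloTree n) (hmax : ∀ T' : PhyloTree n, T'.gamma ≤ T.gamma) :
    T.IsCaterpillar := by
  intro A B C hA hB hC hAB hAC hBC hU
  by_contra hcon
  push_neg at hcon
  obtain ⟨h1, h2, h3⟩ := hcon
  have ha : 2 ≤ A.card := by
    have := Finset.card_pos.mpr (T.proper A hA).1
    omega
  have hb : 2 ≤ B.card := by
    have := Finset.card_pos.mpr (T.proper B hB).1
    omega
  have hc : 2 ≤ C.card := by
    have := Finset.card_pos.mpr (T.proper C hC).1
    omega
  have hU1 : C ∪ A ∪ B = Finset.univ := by rw [← hU]; ac_rfl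
  have hU2 : B ∪ A ∪ C = Finset.univ := by rw [← hU]; ac_rfl
  rcases le_total A.card B.card with hab | hba
  · rcases le_total A.card C.card with hac | hca
    · exact key T hmax hA hB hC hAB hAC hBC hU ha hb hc hab hac
    · exact key T hmax hC hA hB hAC.symm hBC.symm hAB hU1 hc ha hb hca
        (hca.trans hab)
  · rcases le_total B.card C.card with hbc | hcb
    · exact key T hmax hB hA hC hAB.symm hBC hAC hU2 hb ha hc hba hbc
    · exact key T hmax hC hA hB hAC.symm hBC.symm hAB hU1 hc ha hb
        (hcb.trans hba) hcb
end
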